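/- arXiv:1610.02712 — 4 statements merged into one kernel-verified Lean document; each statement's English description precedes it below -/
import Mathlib

section
/- Let g : ℝ/ℤ → ℝ be C¹. For every ε > 0 there exists δ > 0 such that for all x, y on the circle with ‖x − y‖ < δ and every integer n, |g^{(n)}(x) − g^{(n)}(y)| < ε · max{1, |n|·‖x − y‖}, where g^{(n)} denotes the Birkhoff cocycle of g over the rotation by a fixed irrational α. -/
noncomputable def cdist (x : ℝ) : ℝ := ‖(x : AddCircle (1:ℝ))‖

/-- The Birkhoff cocycle of `g` over the rotation by `α` on the circle
(represented by `1`-periodic functions on `ℝ`). -/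
noncomputable def birkZ (α : ℝ) (g : ℝ → ℝ) (n : ℤ) (x : ℝ) : ℝ :=
  if 0 ≤ n then ∑ i ∈ Finset.range n.toNat, g (x + (i : ℝ) * α)
  else -∑ i ∈ Finset.range (-n).toNat, g (x + ((n : ℝ) + (i : ℝ)) * α)

open Finset intervalIntegral Complex

noncomputable def birkN (α : ℝ) (g : ℝ → ℝ) (n : ℕ) (x : ℝ) : ℝ :=
  ∑ i ∈ Finset.range n, g (x + (i : ℝ) * α)

lemma cdist_eq (t : ℝ) : cdist t = |t - round t| := by
  rw [cdist, AddCircle.norm_eq]; norm_num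

lemma hasDerivAt_birkN (α : ℝ) {g : ℝ → ℝ} (hg : Differentiable ℝ g) (n : ℕ) (t : ℝ) :
    HasDerivAt (birkN α g n) (birkN α (deriv g) n t) t := by
  unfold birkN
  apply HasDerivAt.fun_sum
  intro i _
  have h1 := (hg (t + (i : ℝ) * α)).hasDerivAt
  simpa [Function.comp_def] using h1.comp t ((hasDerivAt_id t).add_const ((i : ℝ) * α))

lemma birkN_int (α : ℝ) {g : ℝ → ℝ} (hper : Function.Periodic g 1) (n : ℕ) (y : ℝ) (k : ℤ) :
    birkN α g n (y + k) = birkN α g n y := by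
  unfold birkN
  refine Finset.sum_congr rfl fun i _ => ?_
  have := hper.sub_int_mul_eq (x := (y : ℝ) + (k : ℝ) + (i : ℝ) * α) k
  rw [show (y : ℝ) + (k:ℝ) + (i:ℝ)*α - (k:ℝ)*1 = y + (i:ℝ)*α by ring] at this
  exact this.symm

/-- Mean value theorem estimate for Birkhoff sums over the circle. -/
lemma birkN_diff_le (α : ℝ) {g : ℝ → ℝ} (hg : Differentiable ℝ g)
    (hper : Function.Periodic g 1) {n : ℕ} {b : ℝ}
    (hb : ∀ t : ℝ, |birkN α (deriv g) n t| ≤ b) (x y : ℝ) :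
    |birkN α g n x - birkN α g n y| ≤ b * cdist (x - y) := by
  set k : ℤ := round (x - y) with hk
  have h1 : birkN α g n y = birkN α g n (y + k) := (birkN_int α hper n y k).symm
  rw [h1, cdist_eq]
  have := Convex.norm_image_sub_le_of_norm_hasDerivWithin_le
    (f := birkN α g n) (f' := birkN α (deriv g) n) (s := Set.univ) (C := b)
    (fun t _ => (hasDerivAt_birkN α hg n t).hasDerivWithinAt)
    (fun t _ => by simpa [Real.norm_eq_abs] using hb t)
    convex_univ (Set.mem_univ (y + (k:ℝ))) (Set.mem_univ x)
  simp only [Real.norm_eq_abs] at this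
  calc |birkN α g n x - birkN α g n (y + k)| ≤ b * |x - (y + k)| := this
    _ = b * |x - y - k| := by ring_nf

instance fact_zero_lt_one_real : Fact ((0:ℝ) < 1) := ⟨one_pos⟩

lemma contC (u : C(AddCircle (1:ℝ), ℂ)) : Continuous (fun t : ℝ => u t) :=
  u.continuous.comp (AddCircle.continuous_mk' 1)

lemma intgC (u : C(AddCircle (1:ℝ), ℂ)) :
    IntervalIntegrable (fun t : ℝ => u t) MeasureTheory.volume 0 1 :=
  (contC u).intervalIntegrable 0 1

/-- Birkhoff sums of zero-mean trigonometric polynomials are uniformly bounded. -/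
lemma span_bound (α : ℝ) (hα : Irrational α) (u : C(AddCircle (1:ℝ), ℂ))
    (hu : u ∈ Submodule.span ℂ (Set.range (@fourier 1))) :
    ∃ C : ℝ, 0 ≤ C ∧ ∀ n : ℕ, ∀ x : ℝ,
      ‖(∑ i ∈ Finset.range n, u ((x + (i:ℝ) * α : ℝ))) -
        (n : ℂ) * ∫ t in (0:ℝ)..1, u (t : ℝ)‖ ≤ C := by
  induction hu using Submodule.span_induction with
  | mem v hv =>
    obtain ⟨k, rfl⟩ := hv
    by_cases hk : k = 0
    · subst hk
      refine ⟨0, le_refl _, fun n x => ?_⟩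
      simp [fourier_zero]
    · -- k ≠ 0
      set c : ℂ := 2 * Real.pi * I * k with hc
      have hcne : c ≠ 0 := by
        simp [hc, Real.pi_ne_zero, I_ne_zero, hk]
      set z : ℂ := Complex.exp (c * α) with hz
      have hz1 : z ≠ 1 := by
        intro h
        rw [hz, Complex.exp_eq_one_iff] at h
        obtain ⟨m, hm⟩ := h
        have h2 : (2 * Real.pi * I : ℂ) ≠ 0 := by
          simp [Real.pi_ne_zero, I_ne_zero]
        have : ((k : ℂ) * α) = m := by
          apply mul_left_cancel₀ h2
          rw [show (2 * (Real.pi:ℂ) * I) * ((k:ℂ) * α) = c * α by rw [hc]; ring, hm]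
          ring
        have hreal : (k : ℝ) * α = m := by
          exact_mod_cast this
        apply hα
        refine ⟨(m : ℚ) / (k : ℚ), ?_⟩
        have hkR : (k:ℝ) ≠ 0 := Int.cast_ne_zero.mpr hk
        push_cast
        rw [div_eq_iff hkR]
        linarith [hreal]
      -- integral of fourier k is zero
      have hint : (∫ t in (0:ℝ)..1, (fourier k) ((t : ℝ) : AddCircle (1:ℝ))) = 0 := by
        have heq : ∀ t : ℝ, (fourier k) ((t : ℝ) : AddCircle (1:ℝ)) = Complex.exp (c * t) := by
          intro t
          rw [fourier_coe_apply]
          congr 1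
          rw [hc]
          push_cast
          ring
        simp_rw [heq]
        have h1 : Complex.exp c = 1 := by
          rw [hc, show (2 * (Real.pi:ℂ) * I * (k:ℂ)) = (k:ℂ) * (2 * Real.pi * I) by ring]
          exact Complex.exp_int_mul_two_pi_mul_I k
        rw [integral_exp_mul_complex hcne]
        norm_num [h1]
      refine ⟨2 / ‖z - 1‖, by positivity, fun n x => ?_⟩
      rw [hint, mul_zero, sub_zero]
      have hterm : ∀ i : ℕ, (fourier k) ((x + (i:ℝ) * α : ℝ) : AddCircle (1:ℝ))
          = Complex.exp (c * x) * z ^ i := by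
        intro i
        rw [fourier_coe_apply, hz, ← Complex.exp_nat_mul, ← Complex.exp_add]
        congr 1
        rw [hc]
        push_cast
        ring
      simp_rw [hterm, ← Finset.mul_sum]
      rw [norm_mul]
      have habs : ∀ r : ℝ, ‖Complex.exp (c * (r:ℂ))‖ = 1 := by
        intro r
        rw [show c * (r:ℂ) = ((2*Real.pi*(k:ℝ)*r : ℝ):ℂ) * I by rw [hc]; push_cast; ring]
        exact Complex.norm_exp_ofReal_mul_I _
      rw [habs x, one_mul, geom_sum_eq hz1, norm_div]
      have h2 : ‖z ^ n - 1‖ ≤ 2 := by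
        calc ‖z ^ n - 1‖ ≤ ‖z ^ n‖ + ‖(1:ℂ)‖ := norm_sub_le _ _
          _ = 1 + 1 := by rw [norm_pow, hz, habs α]; simp
          _ = 2 := by norm_num
      have h3 : 0 < ‖z - 1‖ := by
        rw [norm_pos_iff, sub_ne_zero]
        exact hz1
      gcongr
  | zero =>
    exact ⟨0, le_refl _, fun n x => by simp⟩
  | add v w hv hw ihv ihw =>
    obtain ⟨C1, hC10, h1⟩ := ihv
    obtain ⟨C2, hC20, h2⟩ := ihw
    refine ⟨C1 + C2, by positivity, fun n x => ?_⟩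
    have hi : (∫ t in (0:ℝ)..1, (v + w) ((t:ℝ) : AddCircle (1:ℝ)))
        = (∫ t in (0:ℝ)..1, v ((t:ℝ):AddCircle (1:ℝ))) + ∫ t in (0:ℝ)..1, w ((t:ℝ):AddCircle (1:ℝ)) := by
      simp_rw [ContinuousMap.add_apply]
      exact integral_add (intgC v) (intgC w)
    calc ‖(∑ i ∈ Finset.range n, (v+w) ((x + (i:ℝ)*α : ℝ) : AddCircle (1:ℝ))) -
          (n:ℂ) * ∫ t in (0:ℝ)..1, (v+w) ((t:ℝ):AddCircle (1:ℝ))‖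
        = ‖((∑ i ∈ Finset.range n, v ((x + (i:ℝ)*α : ℝ):AddCircle (1:ℝ))) -
            (n:ℂ) * ∫ t in (0:ℝ)..1, v ((t:ℝ):AddCircle (1:ℝ))) +
          ((∑ i ∈ Finset.range n, w ((x + (i:ℝ)*α : ℝ):AddCircle (1:ℝ))) -
            (n:ℂ) * ∫ t in (0:ℝ)..1, w ((t:ℝ):AddCircle (1:ℝ)))‖ := by
          rw [hi]; congr 1
          simp [Finset.sum_add_distrib]; ring
      _ ≤ _ + _ := norm_add_le _ _
      _ ≤ C1 + C2 := add_le_add (h1 n x) (h2 n x)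
  | smul a v hv ihv =>
    obtain ⟨C, hC0, h1⟩ := ihv
    refine ⟨‖a‖ * C, by positivity, fun n x => ?_⟩
    have hi : (∫ t in (0:ℝ)..1, (a • v) ((t:ℝ) : AddCircle (1:ℝ)))
        = a * ∫ t in (0:ℝ)..1, v ((t:ℝ):AddCircle (1:ℝ)) := by
      simp_rw [ContinuousMap.smul_apply, smul_eq_mul]
      exact integral_const_mul a _
    calc ‖(∑ i ∈ Finset.range n, (a • v) ((x + (i:ℝ)*α : ℝ) : AddCircle (1:ℝ))) -
          (n:ℂ) * ∫ t in (0:ℝ)..1, (a • v) ((t:ℝ):AddCircle (1:ℝ))‖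
        = ‖a * ((∑ i ∈ Finset.range n, v ((x + (i:ℝ)*α : ℝ):AddCircle (1:ℝ))) -
            (n:ℂ) * ∫ t in (0:ℝ)..1, v ((t:ℝ):AddCircle (1:ℝ)))‖ := by
          rw [hi]
          simp only [ContinuousMap.smul_apply, smul_eq_mul]
          congr 1
          rw [mul_sub, Finset.mul_sum]
          ring
      _ = ‖a‖ * ‖_‖ := norm_mul _ _
      _ ≤ ‖a‖ * C := by gcongr; exact h1 n x

/-- Sublinear growth of Birkhoff sums of a zero-mean continuous periodic function. -/
lemma birkN_sublinear (α : ℝ) (hα : Irrational α) (h : ℝ → ℝ) (hc : Continuous h)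
    (hp : Function.Periodic h 1) (hint : (∫ t in (0:ℝ)..1, h t) = 0) :
    ∀ ε > 0, ∃ N : ℕ, ∀ n : ℕ, N ≤ n → ∀ x : ℝ,
      |∑ i ∈ Finset.range n, h (x + (i:ℝ) * α)| ≤ ε * n := by
  intro ε hε
  -- the complex lift of h to the circle
  have hp' : Function.Periodic (fun t : ℝ => (h t : ℂ)) 1 := fun x => by
    simp [hp x]
  have hlc : Continuous hp'.lift := by
    have : Continuous (fun t : ℝ => (h t : ℂ)) := Complex.continuous_ofReal.comp hc
    exact this.quotient_liftOn' _
  set hC : C(AddCircle (1:ℝ), ℂ) := ⟨hp'.lift, hlc⟩ with hhC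
  have hCapp : ∀ t : ℝ, hC ((t : ℝ) : AddCircle (1:ℝ)) = (h t : ℂ) := fun t => rfl
  -- choose a trigonometric polynomial close to hC
  have hdense : Dense ((Submodule.span ℂ (Set.range (@fourier 1)) : Submodule ℂ C(AddCircle (1:ℝ), ℂ)) : Set C(AddCircle (1:ℝ), ℂ)) :=
    Submodule.dense_iff_topologicalClosure_eq_top.mpr span_fourier_closure_eq_top
  have hε4 : 0 < ε / 4 := by positivity
  obtain ⟨P, hPmem, hPdist⟩ : ∃ P ∈ Submodule.span ℂ (Set.range (@fourier 1)), dist hC P < ε / 4 := by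
    have := Metric.dense_iff.mp hdense hC (ε/4) hε4
    obtain ⟨P, hP1, hP2⟩ := this
    exact ⟨P, hP2, by rwa [Metric.mem_ball, dist_comm] at hP1⟩
  obtain ⟨C, hC0, hCb⟩ := span_bound α hα P hPmem
  -- pointwise closeness
  have hclose : ∀ z : AddCircle (1:ℝ), ‖hC z - P z‖ ≤ ε / 4 := by
    intro z
    calc ‖hC z - P z‖ = ‖(hC - P) z‖ := by simp
      _ ≤ ‖hC - P‖ := ContinuousMap.norm_coe_le_norm _ z
      _ ≤ ε / 4 := by rw [← dist_eq_norm]; exact le_of_lt hPdist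
  -- integral of hC is zero
  have hintC : (∫ t in (0:ℝ)..1, hC ((t:ℝ) : AddCircle (1:ℝ))) = 0 := by
    simp_rw [hCapp]
    rw [intervalIntegral.integral_ofReal, hint]
    simp
  -- the integral of P is small
  have hIP : ‖∫ t in (0:ℝ)..1, P ((t:ℝ) : AddCircle (1:ℝ))‖ ≤ ε / 4 := by
    have heq : (∫ t in (0:ℝ)..1, P ((t:ℝ) : AddCircle (1:ℝ)))
        = ∫ t in (0:ℝ)..1, (P ((t:ℝ) : AddCircle (1:ℝ)) - hC ((t:ℝ) : AddCircle (1:ℝ))) := by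
      rw [intervalIntegral.integral_sub (intgC P) (intgC hC), hintC, sub_zero]
    rw [heq]
    have := intervalIntegral.norm_integral_le_of_norm_le_const
      (C := ε/4) (f := fun t : ℝ => P ((t:ℝ) : AddCircle (1:ℝ)) - hC ((t:ℝ) : AddCircle (1:ℝ)))
      (a := 0) (b := 1) ?_
    · simpa using this
    · intro t _
      rw [norm_sub_rev]
      exact hclose _
  -- choose N
  obtain ⟨N, hN⟩ : ∃ N : ℕ, C ≤ (ε/2) * N := by
    refine ⟨⌈C / (ε/2)⌉₊, ?_⟩
    rw [← div_le_iff₀' (by positivity)]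
    exact Nat.le_ceil _
  refine ⟨N, fun n hn x => ?_⟩
  -- pass to complex
  have key : ‖∑ i ∈ Finset.range n, hC ((x + (i:ℝ)*α : ℝ) : AddCircle (1:ℝ))‖ ≤ ε * n := by
    have hnn : (N:ℝ) ≤ (n:ℝ) := by exact_mod_cast hn
    have hCle : C ≤ (ε/2) * n := by nlinarith
    set IP : ℂ := ∫ t in (0:ℝ)..1, P ((t:ℝ) : AddCircle (1:ℝ)) with hIPdef
    set A : ℂ := ∑ i ∈ Finset.range n, hC ((x + (i:ℝ)*α : ℝ) : AddCircle (1:ℝ)) with hA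
    set B : ℂ := ∑ i ∈ Finset.range n, P ((x + (i:ℝ)*α : ℝ) : AddCircle (1:ℝ)) with hB
    have h1 : ‖A - B‖ ≤ (n:ℝ) * (ε/4) := by
      rw [hA, hB, ← Finset.sum_sub_distrib]
      calc ‖∑ i ∈ Finset.range n, (hC ((x + (i:ℝ)*α : ℝ) : AddCircle (1:ℝ)) - P ((x + (i:ℝ)*α : ℝ) : AddCircle (1:ℝ)))‖
          ≤ ∑ i ∈ Finset.range n, ‖hC ((x + (i:ℝ)*α : ℝ) : AddCircle (1:ℝ)) - P ((x + (i:ℝ)*α : ℝ) : AddCircle (1:ℝ))‖ :=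
            norm_sum_le _ _
        _ ≤ ∑ _i ∈ Finset.range n, (ε/4) := Finset.sum_le_sum (fun i _ => hclose _)
        _ = (n : ℝ) * (ε/4) := by
            rw [Finset.sum_const, Finset.card_range, nsmul_eq_mul]
    have h2 : ‖B - (n:ℂ) * IP‖ ≤ C := hCb n x
    have h3 : ‖(n:ℂ) * IP‖ ≤ (n:ℝ) * (ε/4) := by
      rw [norm_mul, Complex.norm_natCast]
      exact mul_le_mul_of_nonneg_left hIP (Nat.cast_nonneg n)
    calc ‖A‖ = ‖(A - B) + (B - (n:ℂ) * IP) + (n:ℂ) * IP‖ := by congr 1; ring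
      _ ≤ ‖A - B‖ + ‖B - (n:ℂ) * IP‖ + ‖(n:ℂ) * IP‖ := norm_add₃_le
      _ ≤ (n:ℝ) * (ε/4) + ((ε/2) * n) + (n:ℝ) * (ε/4) :=
          add_le_add (add_le_add h1 (h2.trans hCle)) h3
      _ = ε * n := by ring
  -- back to real
  have : ((∑ i ∈ Finset.range n, h (x + (i:ℝ) * α) : ℝ) : ℂ)
      = ∑ i ∈ Finset.range n, hC ((x + (i:ℝ)*α : ℝ) : AddCircle (1:ℝ)) := by
    push_cast
    exact Finset.sum_congr rfl fun i _ => (hCapp _).symm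
  calc |∑ i ∈ Finset.range n, h (x + (i:ℝ) * α)|
      = ‖((∑ i ∈ Finset.range n, h (x + (i:ℝ) * α) : ℝ) : ℂ)‖ := by
        rw [Complex.norm_real, Real.norm_eq_abs]
    _ ≤ ε * n := by rw [this]; exact key

section aux
variable {g : ℝ → ℝ} (hg : ContDiff ℝ 1 g) (hper : Function.Periodic g 1)

include hper in
lemma deriv_periodic : Function.Periodic (deriv g) 1 := by
  intro x
  have hfg : (fun t => g (t + 1)) = g := funext fun t => hper t
  calc deriv g (x + 1) = deriv (fun t => g (t + 1)) x := (deriv_comp_add_const _ _ _).symm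
    _ = deriv g x := by rw [hfg]

include hg hper in
lemma deriv_bounded : ∃ M : ℝ, 0 ≤ M ∧ ∀ x : ℝ, |deriv g x| ≤ M := by
  have hcont : Continuous (fun x => |deriv g x|) := (hg.continuous_deriv le_rfl).abs
  obtain ⟨x₀, _, hx₀⟩ := (isCompact_Icc (a := (0:ℝ)) (b := 1)).exists_isMaxOn
    (Set.nonempty_Icc.mpr zero_le_one) hcont.continuousOn
  refine ⟨|deriv g x₀|, abs_nonneg _, fun x => ?_⟩
  have hfr : deriv g (Int.fract x) = deriv g x := by
    have := (deriv_periodic (g := g) hper).sub_int_mul_eq (x := x) ⌊x⌋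
    rw [mul_one] at this
    rw [Int.fract]
    exact this
  rw [← hfr]
  exact hx₀ ⟨Int.fract_nonneg x, (Int.fract_lt_one x).le⟩

include hg hper in
lemma deriv_integral_zero : (∫ t in (0:ℝ)..1, deriv g t) = 0 := by
  rw [intervalIntegral.integral_deriv_eq_sub
    (fun x _ => (hg.differentiable one_ne_zero).differentiableAt)
    ((hg.continuous_deriv le_rfl).intervalIntegrable 0 1)]
  have := hper 0
  simp at this
  rw [this]
  ring

end aux

lemma birkZ_nonneg (α : ℝ) (g : ℝ → ℝ) (n : ℤ) (hn : 0 ≤ n) (x : ℝ) :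
    birkZ α g n x = birkN α g n.toNat x := by
  rw [birkZ, if_pos hn]; rfl

lemma birkZ_neg (α : ℝ) (g : ℝ → ℝ) (n : ℤ) (hn : ¬ 0 ≤ n) (x : ℝ) :
    birkZ α g n x = - birkN α g (-n).toNat (x + (n:ℝ) * α) := by
  rw [birkZ, if_neg hn, birkN]
  congr 1
  refine Finset.sum_congr rfl fun i _ => ?_
  congr 1
  ring

/-- For a `C¹` function `g` on the circle, for every `ε > 0` there is `δ > 0` such that for
all `x, y` with `‖x − y‖ < δ` and every `n ∈ ℤ`,
`|g^{(n)}(x) − g^{(n)}(y)| < ε · max{1, |n|·‖x−y‖}`. -/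
theorem stmt2 (α : ℝ) (hα : Irrational α) (g : ℝ → ℝ)
    (hg : ContDiff ℝ 1 g) (hper : Function.Periodic g 1) :
    ∀ ε > 0, ∃ δ > 0, ∀ x y : ℝ, cdist (x - y) < δ → ∀ n : ℤ,
      |birkZ α g n x - birkZ α g n y| < ε * max 1 (|(n : ℝ)| * cdist (x - y)) := by
  intro ε hε
  have hdiff : Differentiable ℝ g := hg.differentiable one_ne_zero
  have hdc : Continuous (deriv g) := hg.continuous_deriv le_rfl
  have hdp : Function.Periodic (deriv g) 1 := deriv_periodic hper
  obtain ⟨M, hM0, hM⟩ := deriv_bounded hg hper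
  obtain ⟨N, hN⟩ := birkN_sublinear α hα (deriv g) hdc hdp (deriv_integral_zero hg hper)
    (ε/2) (half_pos hε)
  refine ⟨ε / (M * N + 1), by positivity, fun x y hxy n => ?_⟩
  set c := cdist (x - y) with hc
  have hc0 : 0 ≤ c := norm_nonneg _
  -- the key estimate for natural numbers of iterates
  have key : ∀ (m : ℕ) (x' y' : ℝ), x' - y' = x - y →
      |birkN α g m x' - birkN α g m y'| < ε * max 1 ((m:ℝ) * c) := by
    intro m x' y' hxy'
    have hmax1 : (1:ℝ) ≤ max 1 ((m:ℝ) * c) := le_max_left _ _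
    by_cases hm : N ≤ m
    · -- large m : use sublinearity of derivative sums
      have hb : ∀ t : ℝ, |birkN α (deriv g) m t| ≤ (ε/2) * m := fun t => by
        simpa [birkN] using hN m hm t
      have hest := birkN_diff_le α hdiff hper hb x' y'
      rw [hxy', ← hc] at hest
      calc |birkN α g m x' - birkN α g m y'| ≤ (ε/2) * m * c := hest
        _ = (ε/2) * ((m:ℝ) * c) := by ring
        _ ≤ (ε/2) * max 1 ((m:ℝ) * c) := by
            apply mul_le_mul_of_nonneg_left (le_max_right _ _) (by positivity)
        _ < ε * max 1 ((m:ℝ) * c) := by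
            have hpos : (0:ℝ) < max 1 ((m:ℝ) * c) := lt_of_lt_of_le one_pos hmax1
            have : ε/2 < ε := by linarith
            exact mul_lt_mul_of_pos_right this hpos
    · -- small m : use the Lipschitz bound
      push_neg at hm
      have hb : ∀ t : ℝ, |birkN α (deriv g) m t| ≤ M * m := fun t => by
        rw [birkN]
        calc |∑ i ∈ Finset.range m, deriv g (t + (i:ℝ) * α)|
            ≤ ∑ i ∈ Finset.range m, |deriv g (t + (i:ℝ) * α)| :=
              Finset.abs_sum_le_sum_abs _ _
          _ ≤ ∑ _i ∈ Finset.range m, M := Finset.sum_le_sum fun i _ => hM _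
          _ = M * m := by rw [Finset.sum_const, Finset.card_range, nsmul_eq_mul]; ring
      have hest := birkN_diff_le α hdiff hper hb x' y'
      rw [hxy', ← hc] at hest
      have hmn : (m:ℝ) ≤ (N:ℝ) := by exact_mod_cast hm.le
      have hδ : c < ε / (M * N + 1) := hxy
      have hp : (0:ℝ) < M * N + 1 := by positivity
      have h4 : M * m * c ≤ M * N * c := by
        apply mul_le_mul_of_nonneg_right _ hc0
        exact mul_le_mul_of_nonneg_left hmn hM0
      have h5 : M * N * c < ε := by
        have hMN : (0:ℝ) ≤ M * N := by positivity
        calc M * N * c ≤ M * N * (ε / (M * N + 1)) :=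
              mul_le_mul_of_nonneg_left hδ.le hMN
          _ = (M * N) / (M * N + 1) * ε := by ring
          _ < 1 * ε := by
              apply mul_lt_mul_of_pos_right _ hε
              rw [div_lt_one hp]
              linarith
          _ = ε := one_mul ε
      calc |birkN α g m x' - birkN α g m y'| ≤ M * m * c := hest
        _ ≤ M * N * c := h4
        _ < ε := h5
        _ ≤ ε * max 1 ((m:ℝ) * c) := le_mul_of_one_le_right hε.le hmax1
  rcases le_or_gt 0 n with hn | hn
  · rw [birkZ_nonneg α g n hn, birkZ_nonneg α g n hn]
    have habs : |(n:ℝ)| = ((n.toNat : ℕ) : ℝ) := by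
      rw [_root_.abs_of_nonneg (show (0:ℝ) ≤ (n:ℝ) by exact_mod_cast hn)]
      exact_mod_cast (Int.toNat_of_nonneg hn).symm
    rw [habs]
    exact key n.toNat x y rfl
  · have hn' : ¬ 0 ≤ n := not_le.mpr hn
    rw [birkZ_neg α g n hn', birkZ_neg α g n hn']
    have habs : |(n:ℝ)| = (((-n).toNat : ℕ) : ℝ) := by
      rw [abs_of_neg (show (n:ℝ) < 0 by exact_mod_cast hn)]
      have : ((-n).toNat : ℤ) = -n := Int.toNat_of_nonneg (by omega)
      exact_mod_cast this.symm
    rw [habs]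
    have hk := key (-n).toNat (x + (n:ℝ)*α) (y + (n:ℝ)*α) (by ring)
    calc |(- birkN α g (-n).toNat (x + (n:ℝ)*α)) - (- birkN α g (-n).toNat (y + (n:ℝ)*α))|
        = |birkN α g (-n).toNat (x + (n:ℝ)*α) - birkN α g (-n).toNat (y + (n:ℝ)*α)| := by
          rw [neg_sub_neg, abs_sub_comm]
    _ < ε * max 1 ((((-n).toNat : ℕ):ℝ) * c) := hk
end

section
/- Let (X, μ) be a probability space and (B_n) a sequence of measurable sets such that |μ(B_n ∩ B_m) − μ(B_n)μ(B_m)| ≤ ε(|n − m|) for all n ≠ m, where Σ_k ε(k)/k < ∞. Then (1/n) Σ_{i=1}^n (1_{B_i} − μ(B_i)) → 0 μ-almost everywhere. -/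
open MeasureTheory Filter Finset

section DEL

lemma diff_le_of_step (S : ℕ → ℝ) (hstep : ∀ n, |S (n+1) - S n| ≤ 1) :
    ∀ n m, n ≤ m → |S m - S n| ≤ (m - n : ℕ) := by
  intro n m hnm
  induction m, hnm using Nat.le_induction with
  | base => simp
  | succ m hm ih =>
    have : S (m+1) - S n = (S (m+1) - S m) + (S m - S n) := by ring
    rw [this]
    calc |(S (m+1) - S m) + (S m - S n)| ≤ |S (m+1) - S m| + |S m - S n| := abs_add_le _ _
      _ ≤ 1 + (m - n : ℕ) := add_le_add (hstep m) ih
      _ ≤ ((m + 1 - n : ℕ) : ℝ) := by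
          push_cast [Nat.sub_add_comm hm] at *
          rw [Nat.cast_sub hm] <;> push_cast <;> linarith

lemma det_lemma (S : ℕ → ℝ) (hstep : ∀ n, |S (n+1) - S n| ≤ 1)
    (hsum : Summable (fun n => (S n)^2 / (n:ℝ)^3)) :
    Filter.Tendsto (fun n => S n / n) atTop (nhds 0) := by
  rw [Metric.tendsto_atTop]
  intro δ hδ
  set δ' : ℝ := min δ 1 with hδ'def
  have hδ'pos : 0 < δ' := lt_min hδ one_pos
  have hδ'le1 : δ' ≤ 1 := min_le_right _ _
  have hδ'leδ : δ' ≤ δ := min_le_left _ _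
  set c : ℝ := 9/512 * δ'^3 with hcdef
  have hc : 0 < c := by positivity
  obtain ⟨s, hs⟩ := hsum.vanishing (e := Set.Iio c) (Iio_mem_nhds hc)
  set N : ℕ := s.sup id + 1 with hNdef
  refine ⟨max N 1, fun n hn => ?_⟩
  have hnN : N ≤ n := le_trans (le_max_left _ _) hn
  have hn1 : 1 ≤ n := le_trans (le_max_right _ _) hn
  have hnpos : (0:ℝ) < n := by exact_mod_cast hn1
  have key : |S n| < δ' * n := by
    by_contra hcon
    push_neg at hcon
    set k : ℕ := ⌊δ' * n / 4⌋₊ with hkdef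
    have hk_le : (k:ℝ) ≤ δ' * n / 4 := Nat.floor_le (by positivity)
    have hk_ge : δ' * n / 4 ≤ (k:ℝ) + 1 := le_of_lt (Nat.lt_floor_add_one _)
    have hdisj : Disjoint (Icc n (n+k)) s := by
      rw [Finset.disjoint_left]
      intro a ha hs'
      have h1 : n ≤ a := (Finset.mem_Icc.1 ha).1
      have h2 : a ≤ s.sup id := Finset.le_sup (f := id) hs'
      omega
    have hlt := hs _ hdisj
    have hterm : ∀ m ∈ Icc n (n+k), 9/128 * δ'^2 / n ≤ (S m)^2 / (m:ℝ)^3 := by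
      intro m hm
      obtain ⟨hm1, hm2⟩ := Finset.mem_Icc.1 hm
      have hmpos : (0:ℝ) < m := by
        have : 1 ≤ m := le_trans hn1 hm1
        exact_mod_cast this
      have hmn : (m:ℝ) - n ≤ δ' * n / 4 := by
        have : (m:ℝ) ≤ n + k := by exact_mod_cast hm2
        linarith
      have hSm : 3/4 * (δ' * n) ≤ |S m| := by
        have hd := diff_le_of_step S hstep n m hm1
        have hc1 : ((m - n : ℕ) : ℝ) = (m:ℝ) - n := by rw [Nat.cast_sub hm1]
        rw [hc1] at hd
        have : |S n| - |S m| ≤ |S m - S n| := by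
          have := abs_sub_abs_le_abs_sub (S n) (S m)
          rwa [abs_sub_comm] at this
        linarith
      have hm2n : (m:ℝ) ≤ 2 * n := by
        have : (m:ℝ) ≤ n + k := by exact_mod_cast hm2
        have hδn : δ' * n / 4 ≤ n := by nlinarith
        linarith
      have hsq : (3/4 * (δ' * n))^2 ≤ (S m)^2 := by
        have h0 : (0:ℝ) ≤ 3/4 * (δ' * n) := by positivity
        calc (3/4 * (δ' * n))^2 ≤ |S m|^2 := by
              exact pow_le_pow_left₀ h0 hSm 2
          _ = (S m)^2 := sq_abs _
      have hcube : (m:ℝ)^3 ≤ 8 * n^3 := by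
        calc (m:ℝ)^3 ≤ (2*n)^3 := pow_le_pow_left₀ hmpos.le hm2n 3
          _ = 8 * n^3 := by ring
      rw [div_le_div_iff₀ (by positivity) (by positivity)]
      nlinarith [mul_le_mul_of_nonneg_left hcube (show (0:ℝ) ≤ 9/128*δ'^2 by positivity),
        mul_le_mul_of_nonneg_right hsq hnpos.le]
    have hsum_ge : c ≤ ∑ m ∈ Icc n (n+k), (S m)^2 / (m:ℝ)^3 := by
      have hcard : (Icc n (n+k)).card = k + 1 := by
        rw [Nat.card_Icc]; omega
      calc c = 9/512 * δ'^3 := rfl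
        _ ≤ (δ' * n / 4) * (9/128 * δ'^2 / n) := by
            have heq : (δ' * (n:ℝ) / 4) * (9/128 * δ'^2 / n) = 9/512*δ'^3 := by
              field_simp; ring
            rw [heq]
        _ ≤ ((k:ℝ) + 1) * (9/128 * δ'^2 / n) := by
            apply mul_le_mul_of_nonneg_right hk_ge (by positivity)
        _ = ∑ _m ∈ Icc n (n+k), (9/128 * δ'^2 / n) := by
            rw [Finset.sum_const, hcard]; push_cast; ring
        _ ≤ ∑ m ∈ Icc n (n+k), (S m)^2 / (m:ℝ)^3 := Finset.sum_le_sum hterm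
    have : (∑ m ∈ Icc n (n+k), (S m)^2 / (m:ℝ)^3) < c := hlt
    linarith
  rw [Real.dist_eq, sub_zero, abs_div, abs_of_pos hnpos, div_lt_iff₀ hnpos]
  calc |S n| < δ' * n := key
    _ ≤ δ * n := by nlinarith

end DEL

section Comb

lemma aux_comb (ε : ℕ → ℝ) (hε : ∀ k, 0 ≤ ε k) {n i : ℕ} (hi1 : 1 ≤ i) (hi2 : i ≤ n) :
    ∑ j ∈ (Finset.Icc 1 n).erase i, ε ((i:ℤ)-j).natAbs ≤ 2 * ∑ k ∈ Finset.Icc 1 (n-1), ε k := by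
  have hsplit : (Icc 1 n).erase i = Icc 1 (i-1) ∪ Icc (i+1) n := by
    ext j; simp only [Finset.mem_erase, Finset.mem_Icc, Finset.mem_union]; omega
  have hdisj : Disjoint (Icc 1 (i-1)) (Icc (i+1) n) := by
    rw [Finset.disjoint_left]; intro j hj hj'
    simp only [Finset.mem_Icc] at hj hj'; omega
  rw [hsplit, Finset.sum_union hdisj]
  have h1 : ∑ j ∈ Icc 1 (i-1), ε ((i:ℤ)-j).natAbs ≤ ∑ k ∈ Icc 1 (n-1), ε k := by
    have he : ∑ j ∈ Icc 1 (i-1), ε ((i:ℤ)-j).natAbs = ∑ k ∈ Icc 1 (i-1), ε k := by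
      refine Finset.sum_nbij' (fun j => i - j) (fun k => i - k) ?_ ?_ ?_ ?_ ?_
      · intro j hj; simp only [Finset.mem_Icc] at *; omega
      · intro k hk; simp only [Finset.mem_Icc] at *; omega
      · intro j hj; simp only [Finset.mem_Icc] at hj; omega
      · intro k hk; simp only [Finset.mem_Icc] at hk; omega
      · intro j hj
        simp only [Finset.mem_Icc] at hj
        congr 1
        omega
    rw [he]
    apply Finset.sum_le_sum_of_subset_of_nonneg
    · apply Finset.Icc_subset_Icc_right; omega
    · intro k _ _; exact hε k
  have h2 : ∑ j ∈ Icc (i+1) n, ε ((i:ℤ)-j).natAbs ≤ ∑ k ∈ Icc 1 (n-1), ε k := by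
    have he : ∑ j ∈ Icc (i+1) n, ε ((i:ℤ)-j).natAbs = ∑ k ∈ Icc 1 (n-i), ε k := by
      refine Finset.sum_nbij' (fun j => j - i) (fun k => k + i) ?_ ?_ ?_ ?_ ?_
      · intro j hj; simp only [Finset.mem_Icc] at *; omega
      · intro k hk; simp only [Finset.mem_Icc] at *; omega
      · intro j hj; simp only [Finset.mem_Icc] at hj; omega
      · intro k hk; simp only [Finset.mem_Icc] at hk; omega
      · intro j hj
        simp only [Finset.mem_Icc] at hj
        congr 1
        omega
    rw [he]
    apply Finset.sum_le_sum_of_subset_of_nonneg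
    · apply Finset.Icc_subset_Icc_right; omega
    · intro k _ _; exact hε k
  linarith

lemma aux_summable (ε : ℕ → ℝ) (hε : ∀ k, 0 ≤ ε k)
    (hsum : Summable (fun k : ℕ => ε (k+1) / (k+1 : ℝ))) :
    Summable (fun n : ℕ => ((n:ℝ) * (1 + 2 * ∑ k ∈ Finset.Icc 1 (n-1), ε k)) / (n:ℝ)^3) := by
  have h1 : Summable (fun n : ℕ => (1:ℝ)/(n:ℝ)^2) := by
    simpa using Real.summable_one_div_nat_pow.2 (show 1 < 2 by norm_num)
  have hcore : Summable (fun n : ℕ => (∑ k ∈ Icc 1 (n-1), ε k) / (n:ℝ)^2) := by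
    have hIc : ∀ n : ℕ, Finset.Icc 1 (n-1) = Finset.Ico 1 n := by
      intro n; ext j; simp only [Finset.mem_Icc, Finset.mem_Ico]; omega
    apply summable_of_sum_range_le (c := 2 * ∑' j:ℕ, ε (j+1)/((j:ℝ)+1))
    · intro n
      have : 0 ≤ ∑ k ∈ Icc 1 (n-1), ε k := Finset.sum_nonneg fun k _ => hε k
      positivity
    · intro N
      calc ∑ n ∈ range N, (∑ k ∈ Icc 1 (n-1), ε k)/(n:ℝ)^2
          = ∑ n ∈ range N, ∑ k ∈ Ico 1 n, ε k/(n:ℝ)^2 := by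
            refine Finset.sum_congr rfl fun n _ => ?_
            rw [hIc n, Finset.sum_div]
        _ = ∑ k ∈ Ico 1 N, ∑ n ∈ Ico (k+1) N, ε k/(n:ℝ)^2 := by
            refine Finset.sum_comm' ?_
            intro n k
            simp only [Finset.mem_range, Finset.mem_Ico]
            omega
        _ ≤ ∑ k ∈ Ico 1 N, 2 * (ε k/(k:ℝ)) := by
            refine Finset.sum_le_sum fun k hk => ?_
            have hk1 : 1 ≤ k := (Finset.mem_Ico.1 hk).1
            have hkpos : (0:ℝ) < k := by exact_mod_cast hk1
            have hin : ∑ n ∈ Ico (k+1) N, ε k/(n:ℝ)^2 = ε k * ∑ n ∈ Ioo k N, ((n:ℝ)^2)⁻¹ := by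
              rw [← Finset.Ico_add_one_left_eq_Ioo, Finset.mul_sum]
              exact Finset.sum_congr rfl fun n _ => by rw [div_eq_mul_inv]
            rw [hin]
            calc ε k * ∑ n ∈ Ioo k N, ((n:ℝ)^2)⁻¹ ≤ ε k * (2/((k:ℝ)+1)) := by
                  refine mul_le_mul_of_nonneg_left ?_ (hε k)
                  exact_mod_cast sum_Ioo_inv_sq_le (α := ℝ) k N
              _ ≤ ε k * (2/(k:ℝ)) := by
                  refine mul_le_mul_of_nonneg_left ?_ (hε k)
                  apply div_le_div_of_nonneg_left (by norm_num) hkpos (by linarith)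
              _ = 2 * (ε k/(k:ℝ)) := by ring
        _ = 2 * ∑ k ∈ Ico 1 N, ε k/(k:ℝ) := by rw [Finset.mul_sum]
        _ = 2 * ∑ j ∈ range (N-1), ε (j+1)/((j:ℝ)+1) := by
            rw [Finset.sum_Ico_eq_sum_range]
            congr 1
            refine Finset.sum_congr rfl fun j _ => ?_
            congr 1
            · congr 1; omega
            · push_cast; ring
        _ ≤ 2 * ∑' j:ℕ, ε (j+1)/((j:ℝ)+1) := by
            refine mul_le_mul_of_nonneg_left ?_ (by norm_num)
            refine Summable.sum_le_tsum _ (fun j _ => ?_) ?_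
            · have := hε (j+1); positivity
            · exact hsum
  have heq : ∀ n : ℕ, ((n:ℝ) * (1 + 2 * ∑ k ∈ Icc 1 (n-1), ε k)) / (n:ℝ)^3
      = 1/(n:ℝ)^2 + 2 * ((∑ k ∈ Icc 1 (n-1), ε k) / (n:ℝ)^2) := by
    intro n
    rcases Nat.eq_zero_or_pos n with h0 | hpos
    · subst h0; simp
    · have hne : ((n:ℝ)) ≠ 0 := by positivity
      have h3 : (n:ℝ)^3 = n * n^2 := by ring
      rw [h3, mul_div_mul_left _ _ hne, add_div]
      ring
  have : Summable (fun n : ℕ => 1/(n:ℝ)^2 + 2 * ((∑ k ∈ Icc 1 (n-1), ε k) / (n:ℝ)^2)) :=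
    h1.add (hcore.mul_left 2)
  exact this.congr fun n => (heq n).symm

end Comb

section Prob

variable {X : Type*} [MeasurableSpace X] (μ : Measure X) [IsProbabilityMeasure μ] (B : ℕ → Set X)

noncomputable def fAux (i : ℕ) (x : X) : ℝ := (B i).indicator (fun _ => (1:ℝ)) x - (μ (B i)).toReal

noncomputable def SAux (n : ℕ) (x : X) : ℝ := ∑ i ∈ Finset.Icc 1 n, fAux μ B i x

lemma a_mem (i : ℕ) : 0 ≤ (μ (B i)).toReal ∧ (μ (B i)).toReal ≤ 1 := by
  refine ⟨ENNReal.toReal_nonneg, ?_⟩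
  have h := prob_le_one (μ := μ) (s := B i)
  simpa using ENNReal.toReal_mono ENNReal.one_ne_top h

lemma fAux_abs_le (i : ℕ) (x : X) : |fAux μ B i x| ≤ 1 := by
  obtain ⟨h0, h1⟩ := a_mem μ B i
  unfold fAux
  by_cases hx : x ∈ B i
  · rw [Set.indicator_of_mem hx, abs_le]; constructor <;> nlinarith
  · rw [Set.indicator_of_notMem hx, abs_le]; constructor <;> nlinarith

lemma fAux_meas (hB : ∀ n, MeasurableSet (B n)) (i : ℕ) : Measurable (fAux μ B i) :=
  (measurable_const.indicator (hB i)).sub measurable_const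

lemma fAux_int (hB : ∀ n, MeasurableSet (B n)) (i : ℕ) : Integrable (fAux μ B i) μ :=
  ((integrable_const (1:ℝ)).indicator (hB i)).sub (integrable_const _)

lemma fAux_mul_int (hB : ∀ n, MeasurableSet (B n)) (i j : ℕ) :
    Integrable (fun x => fAux μ B i x * fAux μ B j x) μ :=
  (fAux_int μ B hB j).bdd_mul (fAux_meas μ B hB i).aestronglyMeasurable
    (Filter.Eventually.of_forall fun x => by rw [Real.norm_eq_abs]; exact fAux_abs_le μ B i x)

lemma integral_fAux_mul (hB : ∀ n, MeasurableSet (B n)) (i j : ℕ) :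
    ∫ x, fAux μ B i x * fAux μ B j x ∂μ
      = (μ (B i ∩ B j)).toReal - (μ (B i)).toReal * (μ (B j)).toReal := by
  set a := (μ (B i)).toReal with ha
  set b := (μ (B j)).toReal with hb
  have hpt : (fun x => fAux μ B i x * fAux μ B j x) = fun x =>
      ((B i ∩ B j).indicator (fun _ => (1:ℝ)) x - a * (B j).indicator (fun _ => (1:ℝ)) x)
        - (b * (B i).indicator (fun _ => (1:ℝ)) x - a * b) := by
    funext x
    unfold fAux
    by_cases h1 : x ∈ B i <;> by_cases h2 : x ∈ B j <;>
      simp [Set.indicator_apply, h1, h2, Set.mem_inter_iff] <;> ring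
  rw [hpt]
  have hii : Integrable ((B i ∩ B j).indicator (fun _ => (1:ℝ))) μ :=
    (integrable_const 1).indicator ((hB i).inter (hB j))
  have hij : Integrable (fun x => a * (B j).indicator (fun _ => (1:ℝ)) x) μ :=
    ((integrable_const 1).indicator (hB j)).const_mul a
  have hib : Integrable (fun x => b * (B i).indicator (fun _ => (1:ℝ)) x) μ :=
    ((integrable_const 1).indicator (hB i)).const_mul b
  have hA : Integrable (fun x => (B i ∩ B j).indicator (fun _ => (1:ℝ)) x
      - a * (B j).indicator (fun _ => (1:ℝ)) x) μ := hii.sub hij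
  have hC : Integrable (fun x => b * (B i).indicator (fun _ => (1:ℝ)) x - a * b) μ :=
    hib.sub (integrable_const _)
  rw [integral_sub hA hC,
    integral_sub hii hij, integral_sub hib (integrable_const _),
    integral_const_mul, integral_const_mul,
    integral_indicator_const (1:ℝ) ((hB i).inter (hB j)),
    integral_indicator_const (1:ℝ) (hB j), integral_indicator_const (1:ℝ) (hB i),
    integral_const]
  simp only [smul_eq_mul, mul_one, measureReal_def, measure_univ, ENNReal.toReal_one, ← ha, ← hb]
  ring

lemma var_le (hB : ∀ n, MeasurableSet (B n)) (ε : ℕ → ℝ) (hε : ∀ k, 0 ≤ ε k)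
    (hcorr : ∀ m n : ℕ, m ≠ n →
      |(μ (B n ∩ B m)).toReal - (μ (B n)).toReal * (μ (B m)).toReal| ≤ ε ((n : ℤ) - m).natAbs)
    (n : ℕ) :
    ∫ x, (SAux μ B n x)^2 ∂μ ≤ (n:ℝ) * (1 + 2 * ∑ k ∈ Finset.Icc 1 (n-1), ε k) := by
  have hexp : ∫ x, (SAux μ B n x)^2 ∂μ
      = ∑ i ∈ Icc 1 n, ∑ j ∈ Icc 1 n, ∫ x, fAux μ B i x * fAux μ B j x ∂μ := by
    have hpt : ∀ x, (SAux μ B n x)^2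
        = ∑ i ∈ Icc 1 n, ∑ j ∈ Icc 1 n, fAux μ B i x * fAux μ B j x := by
      intro x
      rw [sq]
      unfold SAux
      rw [Finset.sum_mul_sum]
    calc ∫ x, (SAux μ B n x)^2 ∂μ
        = ∫ x, ∑ i ∈ Icc 1 n, ∑ j ∈ Icc 1 n, fAux μ B i x * fAux μ B j x ∂μ := by
          exact integral_congr_ae (Filter.Eventually.of_forall hpt)
      _ = ∑ i ∈ Icc 1 n, ∑ j ∈ Icc 1 n, ∫ x, fAux μ B i x * fAux μ B j x ∂μ := by
          rw [integral_finset_sum _ (fun i _ =>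
            integrable_finset_sum _ (fun j _ => fAux_mul_int μ B hB i j))]
          exact Finset.sum_congr rfl fun i _ =>
            integral_finset_sum _ (fun j _ => fAux_mul_int μ B hB i j)
  rw [hexp]
  have hrow : ∀ i ∈ Icc 1 n,
      ∑ j ∈ Icc 1 n, ∫ x, fAux μ B i x * fAux μ B j x ∂μ
        ≤ 1 + 2 * ∑ k ∈ Icc 1 (n-1), ε k := by
    intro i hi
    obtain ⟨hi1, hi2⟩ := Finset.mem_Icc.1 hi
    rw [← Finset.add_sum_erase _ _ hi]
    have hdiag : ∫ x, fAux μ B i x * fAux μ B i x ∂μ ≤ 1 := by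
      rw [integral_fAux_mul μ B hB i i, Set.inter_self]
      obtain ⟨h0, h1⟩ := a_mem μ B i
      nlinarith
    have hoff : ∑ j ∈ (Icc 1 n).erase i, ∫ x, fAux μ B i x * fAux μ B j x ∂μ
        ≤ ∑ j ∈ (Icc 1 n).erase i, ε ((i:ℤ)-j).natAbs := by
      refine Finset.sum_le_sum fun j hj => ?_
      have hji : j ≠ i := (Finset.mem_erase.1 hj).1
      calc ∫ x, fAux μ B i x * fAux μ B j x ∂μ
          ≤ |∫ x, fAux μ B i x * fAux μ B j x ∂μ| := le_abs_self _
        _ ≤ ε ((i:ℤ)-j).natAbs := by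
            rw [integral_fAux_mul μ B hB i j]
            exact hcorr j i hji
    have hcomb := aux_comb ε hε hi1 hi2
    linarith
  calc ∑ i ∈ Icc 1 n, ∑ j ∈ Icc 1 n, ∫ x, fAux μ B i x * fAux μ B j x ∂μ
      ≤ ∑ _i ∈ Icc 1 n, (1 + 2 * ∑ k ∈ Icc 1 (n-1), ε k) := Finset.sum_le_sum hrow
    _ = (n:ℝ) * (1 + 2 * ∑ k ∈ Icc 1 (n-1), ε k) := by
        rw [Finset.sum_const, Nat.card_Icc]
        simp only [Nat.add_sub_cancel, nsmul_eq_mul]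

lemma SAux_meas (hB : ∀ n, MeasurableSet (B n)) (n : ℕ) : Measurable (SAux μ B n) := by
  unfold SAux
  exact Finset.measurable_sum _ (fun i _ => fAux_meas μ B hB i)

lemma SAux_int (hB : ∀ n, MeasurableSet (B n)) (n : ℕ) : Integrable (SAux μ B n) μ := by
  unfold SAux
  exact integrable_finset_sum _ (fun i _ => fAux_int μ B hB i)

lemma SAux_abs_le (n : ℕ) (x : X) : |SAux μ B n x| ≤ (n:ℝ) := by
  unfold SAux
  calc |∑ i ∈ Finset.Icc 1 n, fAux μ B i x| ≤ ∑ i ∈ Finset.Icc 1 n, |fAux μ B i x| :=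
        Finset.abs_sum_le_sum_abs _ _
    _ ≤ ∑ _i ∈ Finset.Icc 1 n, (1:ℝ) := Finset.sum_le_sum fun i _ => fAux_abs_le μ B i x
    _ = (n:ℝ) := by rw [Finset.sum_const, Nat.card_Icc]; simp

lemma SAux_sq_int (hB : ∀ n, MeasurableSet (B n)) (n : ℕ) :
    Integrable (fun x => (SAux μ B n x)^2) μ := by
  have : Integrable (fun x => SAux μ B n x * SAux μ B n x) μ :=
    (SAux_int μ B hB n).bdd_mul (SAux_meas μ B hB n).aestronglyMeasurable
      (Filter.Eventually.of_forall fun x => by rw [Real.norm_eq_abs]; exact SAux_abs_le μ B n x)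
  exact this.congr (Filter.Eventually.of_forall fun x => (sq (SAux μ B n x)).symm ▸ rfl) |>.congr
    (Filter.Eventually.of_forall fun x => rfl)

lemma ae_summable (hB : ∀ n, MeasurableSet (B n)) (ε : ℕ → ℝ) (hε : ∀ k, 0 ≤ ε k)
    (hsum : Summable (fun k : ℕ => ε (k+1) / (k+1 : ℝ)))
    (hcorr : ∀ m n : ℕ, m ≠ n →
      |(μ (B n ∩ B m)).toReal - (μ (B n)).toReal * (μ (B m)).toReal| ≤ ε ((n : ℤ) - m).natAbs) :
    ∀ᵐ x ∂μ, Summable (fun n => (SAux μ B n x)^2 / (n:ℝ)^3) := by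
  set g : ℕ → X → ℝ := fun n x => (SAux μ B n x)^2/(n:ℝ)^3 with hg_def
  have hg0 : ∀ n x, 0 ≤ g n x := fun n x => by positivity
  have hgmeas : ∀ n, Measurable (g n) := fun n =>
    ((SAux_meas μ B hB n).pow_const 2).div_const _
  have hgint : ∀ n, Integrable (g n) μ := fun n => (SAux_sq_int μ B hB n).div_const _
  set b : ℕ → ℝ := fun n => ((n:ℝ) * (1 + 2 * ∑ k ∈ Finset.Icc 1 (n-1), ε k))/(n:ℝ)^3 with hb_def
  have hb0 : ∀ n, 0 ≤ b n := by
    intro n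
    have : 0 ≤ ∑ k ∈ Finset.Icc 1 (n-1), ε k := Finset.sum_nonneg fun k _ => hε k
    have h2 : 0 ≤ 1 + 2 * ∑ k ∈ Finset.Icc 1 (n-1), ε k := by linarith
    positivity
  have hgb : ∀ n, ∫ x, g n x ∂μ ≤ b n := by
    intro n
    simp only [hg_def, hb_def]
    rw [integral_div]
    rcases Nat.eq_zero_or_pos n with h0 | hpos
    · subst h0; simp
    · have hpos3 : (0:ℝ) < (n:ℝ)^3 := by positivity
      gcongr
      exact var_le μ B hB ε hε hcorr n
  have hbsummable : Summable b := aux_summable ε hε hsum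
  have hG : ∫⁻ x, ∑' n, ENNReal.ofReal (g n x) ∂μ < ⊤ := by
    rw [lintegral_tsum (fun n => ((hgmeas n).ennreal_ofReal).aemeasurable)]
    have heq : ∀ n, ∫⁻ x, ENNReal.ofReal (g n x) ∂μ = ENNReal.ofReal (∫ x, g n x ∂μ) :=
      fun n => (ofReal_integral_eq_lintegral_ofReal (hgint n)
        (Filter.Eventually.of_forall (hg0 n))).symm
    calc ∑' n, ∫⁻ x, ENNReal.ofReal (g n x) ∂μ
        = ∑' n, ENNReal.ofReal (∫ x, g n x ∂μ) := tsum_congr heq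
      _ ≤ ∑' n, ENNReal.ofReal (b n) :=
          ENNReal.tsum_le_tsum fun n => ENNReal.ofReal_le_ofReal (hgb n)
      _ = ENNReal.ofReal (∑' n, b n) := (ENNReal.ofReal_tsum_of_nonneg hb0 hbsummable).symm
      _ < ⊤ := ENNReal.ofReal_lt_top
  have hae := ae_lt_top (Measurable.ennreal_tsum fun n => (hgmeas n).ennreal_ofReal) hG.ne
  filter_upwards [hae] with x hx
  have hsx : ∑' n, ENNReal.ofReal (g n x) ≠ ⊤ := hx.ne
  have hsummable := ENNReal.summable_toReal hsx
  exact hsummable.congr fun n => ENNReal.toReal_ofReal (hg0 n x)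

end Prob

/-- Strong law of large numbers for weakly correlated indicator functions:
if `|μ(B_n ∩ B_m) − μ(B_n)μ(B_m)| ≤ ε(|n−m|)` with `Σ ε(k)/k < ∞`, then
`(1/n) Σ_{i=1}^n (1_{B_i} − μ(B_i)) → 0` almost everywhere. -/
theorem stmt3 {X : Type*} [MeasurableSpace X] (μ : Measure X) [IsProbabilityMeasure μ]
    (B : ℕ → Set X) (hB : ∀ n, MeasurableSet (B n))
    (ε : ℕ → ℝ) (hε : ∀ k, 0 ≤ ε k)
    (hsum : Summable (fun k : ℕ => ε (k+1) / (k+1 : ℝ)))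
    (hcorr : ∀ m n : ℕ, m ≠ n →
      |(μ (B n ∩ B m)).toReal - (μ (B n)).toReal * (μ (B m)).toReal| ≤ ε ((n : ℤ) - m).natAbs) :
    ∀ᵐ x ∂μ, Tendsto
      (fun n : ℕ => (1 / (n : ℝ)) * ∑ i ∈ Finset.Icc 1 n,
        ((B i).indicator (fun _ => (1:ℝ)) x - (μ (B i)).toReal))
      atTop (nhds 0) := by
  filter_upwards [ae_summable μ B hB ε hε hsum hcorr] with x hx
  have hstep : ∀ n, |SAux μ B (n+1) x - SAux μ B n x| ≤ 1 := by
    intro n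
    have hrec : SAux μ B (n+1) x = SAux μ B n x + fAux μ B (n+1) x := by
      unfold SAux
      exact Finset.sum_Icc_succ_top (by omega) _
    rw [hrec]
    simpa using fAux_abs_le μ B (n+1) x
  have htend := det_lemma (fun n => SAux μ B n x) hstep hx
  refine htend.congr fun n => ?_
  unfold SAux fAux
  rw [div_eq_mul_inv, mul_comm, ← one_div]
end

section
/- Let (X, μ) be a probability space and (B_n) measurable sets with |μ(B_n ∩ B_m) − μ(B_n)μ(B_m)| ≤ ε(|n − m|) where Σ_k ε(k)/k < ∞. If inf_n μ(B_n) > 0 then μ(limsup_n B_n) = 1, i.e. almost every point belongs to infinitely many of the B_n. -/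
open MeasureTheory Filter Topology

lemma kron_aux (ε : ℕ → ℝ) (hε : ∀ k, 0 ≤ ε k)
    (hsum : Summable (fun k : ℕ => ε (k+1) / (k+1 : ℝ))) :
    Tendsto (fun K : ℕ => (∑ k ∈ Finset.range K, ε (k+1)) / K) atTop (𝓝 0) := by
  set c : ℕ → ℝ := fun k => ε (k+1) / (k+1 : ℝ) with hcdef
  have hc0 : ∀ k, 0 ≤ c k := fun k => div_nonneg (hε _) (by positivity)
  set T : ℕ → ℝ := fun j => ∑' i, c (i + j) with hTdef
  have hTlim : Tendsto T atTop (𝓝 0) := tendsto_sum_nat_add c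
  have key : ∀ K, ∑ k ∈ Finset.range K, ε (k+1) ≤ ∑ j ∈ Finset.range K, T j := by
    intro K
    have h1 : ∀ k : ℕ, ε (k+1) = ∑ _j ∈ Finset.range (k+1), c k := by
      intro k
      rw [Finset.sum_const, Finset.card_range, nsmul_eq_mul, hcdef]
      field_simp
      norm_cast
    calc ∑ k ∈ Finset.range K, ε (k+1)
        = ∑ k ∈ Finset.range K, ∑ _j ∈ Finset.range (k+1), c k := by
          exact Finset.sum_congr rfl fun k _ => h1 k
      _ = ∑ j ∈ Finset.range K, ∑ k ∈ Finset.Ico j K, c k := by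
          rw [Finset.range_eq_Ico]
          simp only [← Finset.range_eq_Ico] at *
          rw [Finset.range_eq_Ico]
          simp only [Finset.range_eq_Ico]
          exact (Finset.sum_Ico_Ico_comm 0 K (fun i j => c j)).symm
      _ ≤ ∑ j ∈ Finset.range K, T j := by
          refine Finset.sum_le_sum fun j _ => ?_
          have hsum' : Summable (fun i => c (i + j)) := (summable_nat_add_iff j).2 hsum
          rw [Finset.sum_Ico_eq_sum_range, hTdef]
          have h2 := Summable.sum_le_tsum (Finset.range (K - j)) (fun i _ => hc0 (i + j)) hsum'
          simp only []
          calc ∑ i ∈ Finset.range (K - j), c (j + i)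
              = ∑ i ∈ Finset.range (K - j), c (i + j) := by
                refine Finset.sum_congr rfl fun i _ => by rw [add_comm]
            _ ≤ ∑' i, c (i + j) := h2
  have hces : Tendsto (fun K : ℕ => (K : ℝ)⁻¹ * ∑ j ∈ Finset.range K, T j) atTop (𝓝 0) :=
    hTlim.cesaro
  refine squeeze_zero (fun K => div_nonneg (Finset.sum_nonneg fun k _ => hε _) (Nat.cast_nonneg K)) (fun K => ?_) hces
  rw [div_eq_inv_mul]
  exact mul_le_mul_of_nonneg_left (key K) (by positivity)

lemma chung_erdos {X : Type*} [MeasurableSpace X] (μ : Measure X) [IsProbabilityMeasure μ]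
    (C : ℕ → Set X) (hC : ∀ n, MeasurableSet (C n)) (s : Finset ℕ) :
    (∑ n ∈ s, (μ (C n)).toReal)^2 ≤
      (μ (⋃ n ∈ s, C n)).toReal * ∑ n ∈ s, ∑ m ∈ s, (μ (C n ∩ C m)).toReal := by
  set f : X → ℝ := fun x => ∑ n ∈ s, (C n).indicator 1 x with hfdef
  set U : Set X := ⋃ n ∈ s, C n with hUdef
  have hU : MeasurableSet U := MeasurableSet.biUnion s.countable_toSet (fun n _ => hC n)
  set g : X → ℝ := fun x => U.indicator 1 x with hgdef
  have hf2 : MemLp f 2 μ := by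
    apply memLp_finset_sum
    intro n _
    exact memLp_indicator_const 2 (hC n) 1 (Or.inr (measure_ne_top μ _))
  have hg2 : MemLp g 2 μ := memLp_indicator_const 2 hU 1 (Or.inr (measure_ne_top μ _))
  have hfnn : ∀ x, 0 ≤ f x := fun x =>
    Finset.sum_nonneg fun n _ => Set.indicator_nonneg (fun _ _ => zero_le_one) x
  have hgnn : ∀ x, 0 ≤ g x := fun x => Set.indicator_nonneg (fun _ _ => zero_le_one) x
  have hfg : ∀ x, f x * g x = f x := by
    intro x
    by_cases hx : x ∈ U
    · simp [hgdef, Set.indicator_of_mem hx]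
    · have : f x = 0 := by
        refine Finset.sum_eq_zero fun n hn => ?_
        apply Set.indicator_of_notMem
        exact fun hxn => hx (Set.mem_biUnion hn hxn)
      simp [this]
  -- integrals
  have hintf : ∫ x, f x ∂μ = ∑ n ∈ s, (μ (C n)).toReal := by
    have h := integral_finset_sum (μ := μ) s
      (f := fun n (x : X) => (C n).indicator (1 : X → ℝ) x)
      (fun n _ => ((integrable_const (1:ℝ)).indicator (hC n)))
    calc ∫ x, f x ∂μ = ∑ n ∈ s, ∫ x, (C n).indicator (1 : X → ℝ) x ∂μ := h
      _ = ∑ n ∈ s, (μ (C n)).toReal :=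
        Finset.sum_congr rfl fun n _ => integral_indicator_one (hC n)
  have hsq : ∀ x, f x ^ (2:ℝ) = ∑ n ∈ s, ∑ m ∈ s, (C n ∩ C m).indicator (1 : X → ℝ) x := by
    intro x
    have h1 : f x ^ (2:ℝ) = f x * f x := by
      rw [show (2:ℝ) = ((2:ℕ):ℝ) by norm_num, Real.rpow_natCast, sq]
    rw [h1, hfdef, Finset.sum_mul_sum]
    refine Finset.sum_congr rfl fun n _ => Finset.sum_congr rfl fun m _ => ?_
    rw [Set.inter_indicator_one]
    rfl
  have hintf2 : ∫ x, f x ^ (2:ℝ) ∂μ = ∑ n ∈ s, ∑ m ∈ s, (μ (C n ∩ C m)).toReal := by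
    rw [integral_congr_ae (Eventually.of_forall hsq)]
    have h := integral_finset_sum (μ := μ) s
      (f := fun n (x : X) => ∑ m ∈ s, (C n ∩ C m).indicator (1 : X → ℝ) x)
      (fun n _ => integrable_finset_sum s
        (fun m _ => (integrable_const (1:ℝ)).indicator ((hC n).inter (hC m))))
    calc ∫ x, ∑ n ∈ s, ∑ m ∈ s, (C n ∩ C m).indicator (1 : X → ℝ) x ∂μ
        = ∑ n ∈ s, ∫ x, ∑ m ∈ s, (C n ∩ C m).indicator (1 : X → ℝ) x ∂μ := h
      _ = ∑ n ∈ s, ∑ m ∈ s, (μ (C n ∩ C m)).toReal := by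
        refine Finset.sum_congr rfl fun n _ => ?_
        have h2 := integral_finset_sum (μ := μ) s
          (f := fun m (x : X) => (C n ∩ C m).indicator (1 : X → ℝ) x)
          (fun m _ => (integrable_const (1:ℝ)).indicator ((hC n).inter (hC m)))
        rw [h2]
        exact Finset.sum_congr rfl fun m _ => integral_indicator_one ((hC n).inter (hC m))
  have hintg2 : ∫ x, g x ^ (2:ℝ) ∂μ = (μ U).toReal := by
    have : ∀ x, g x ^ (2:ℝ) = U.indicator (1 : X → ℝ) x := by
      intro x
      by_cases hx : x ∈ U
      · simp [hgdef, Set.indicator_of_mem hx]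
      · show (U.indicator (1 : X → ℝ) x) ^ (2:ℝ) = U.indicator (1 : X → ℝ) x
        rw [Set.indicator_of_notMem hx, Real.zero_rpow (by norm_num)]
    rw [integral_congr_ae (Eventually.of_forall this)]
    exact integral_indicator_one hU
  have hconj : Real.HolderConjugate 2 2 := ⟨by norm_num, by norm_num, by norm_num⟩
  have hCS := integral_mul_le_Lp_mul_Lq_of_nonneg hconj
    (Eventually.of_forall hfnn) (Eventually.of_forall hgnn)
    (by simpa using hf2) (by simpa using hg2)
  rw [integral_congr_ae (Eventually.of_forall hfg), hintf, hintf2, hintg2] at hCS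
  -- now square
  set A := ∑ n ∈ s, (μ (C n)).toReal with hA
  set D := ∑ n ∈ s, ∑ m ∈ s, (μ (C n ∩ C m)).toReal with hD
  have hD0 : 0 ≤ D := Finset.sum_nonneg fun n _ => Finset.sum_nonneg fun m _ =>
    ENNReal.toReal_nonneg
  have hU0 : (0:ℝ) ≤ (μ U).toReal := ENNReal.toReal_nonneg
  have hA0 : 0 ≤ A := Finset.sum_nonneg fun n _ => ENNReal.toReal_nonneg
  have hsqrt : D ^ ((1:ℝ)/2) * (μ U).toReal ^ ((1:ℝ)/2) = Real.sqrt D * Real.sqrt (μ U).toReal := by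
    rw [Real.sqrt_eq_rpow, Real.sqrt_eq_rpow]
  rw [hsqrt] at hCS
  calc A^2 ≤ (Real.sqrt D * Real.sqrt (μ U).toReal)^2 := by
        apply pow_le_pow_left₀ hA0 hCS 2
    _ = D * (μ U).toReal := by
        rw [mul_pow, Real.sq_sqrt hD0, Real.sq_sqrt hU0]
    _ = (μ U).toReal * D := mul_comm _ _

/-- Under the weak correlation condition `|μ(B_n ∩ B_m) − μ(B_n)μ(B_m)| ≤ ε(|n−m|)` with
`Σ ε(k)/k < ∞`, if `inf_n μ(B_n) > 0` then `μ(limsup_n B_n) = 1`. -/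
theorem stmt4 {X : Type*} [MeasurableSpace X] (μ : Measure X) [IsProbabilityMeasure μ]
    (B : ℕ → Set X) (hB : ∀ n, MeasurableSet (B n))
    (ε : ℕ → ℝ) (hε : ∀ k, 0 ≤ ε k)
    (hsum : Summable (fun k : ℕ => ε (k+1) / (k+1 : ℝ)))
    (hcorr : ∀ m n : ℕ, m ≠ n →
      |(μ (B n ∩ B m)).toReal - (μ (B n)).toReal * (μ (B m)).toReal| ≤ ε ((n : ℤ) - m).natAbs)
    (hinf : ∃ c : ℝ, 0 < c ∧ ∀ n, c ≤ (μ (B n)).toReal) :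
    μ (⋂ N : ℕ, ⋃ n : ℕ, ⋃ (_ : N ≤ n), B n) = 1 := by
  obtain ⟨c, hc, hcB⟩ := hinf
  have hone : ∀ s : Set X, (μ s).toReal ≤ 1 := by
    intro s
    rw [show (1:ℝ) = (μ Set.univ).toReal by simp]
    exact ENNReal.toReal_mono (measure_ne_top μ _) (measure_mono (Set.subset_univ s))
  have main : ∀ N : ℕ, μ (⋃ n : ℕ, ⋃ (_ : N ≤ n), B n) = 1 := by
    intro N
    set U : Set X := ⋃ n : ℕ, ⋃ (_ : N ≤ n), B n with hUdef
    set t : ℝ := (μ U).toReal with ht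
    have key : ∀ K : ℕ, 1 ≤ K →
        1 - t ≤ (1 + 2 * ∑ k ∈ Finset.range K, ε (k+1)) / (c^2 * K) := by
      intro K hK
      have hKR : (1:ℝ) ≤ (K:ℝ) := by exact_mod_cast hK
      have hKpos : (0:ℝ) < K := lt_of_lt_of_le one_pos hKR
      set E : ℝ := ∑ k ∈ Finset.range K, ε (k+1) with hE
      have hE0 : 0 ≤ E := Finset.sum_nonneg fun k _ => hε _
      set p : ℕ → ℝ := fun n => (μ (B (N + n))).toReal with hp
      have hp0 : ∀ n, 0 ≤ p n := fun n => ENNReal.toReal_nonneg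
      set A : ℝ := ∑ n ∈ Finset.range K, p n with hA
      have hAc : c * K ≤ A := by
        have h1 : ∑ _n ∈ Finset.range K, c ≤ A := Finset.sum_le_sum fun n _ => hcB (N + n)
        calc c * K = ∑ _n ∈ Finset.range K, c := by
              rw [Finset.sum_const, Finset.card_range, nsmul_eq_mul, mul_comm]
          _ ≤ A := h1
      have hApos : 0 < A := lt_of_lt_of_le (by positivity) hAc
      -- termwise bound on the double sum
      set e : ℕ → ℕ → ℝ := fun n m => if n = m then 1 else ε (((n:ℤ) - m).natAbs) with he
      have hterm : ∀ n m : ℕ, (μ (B (N+n) ∩ B (N+m))).toReal ≤ p n * p m + e n m := by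
        intro n m
        by_cases hnm : n = m
        · subst hnm
          simp only [he, if_pos rfl]
          have := hone (B (N+n) ∩ B (N+n))
          nlinarith [hp0 n]
        · have hne : (N + m) ≠ (N + n) := by omega
          have h2 := hcorr (N + m) (N + n) hne
          have h3 : (((N + n : ℕ) : ℤ) - ((N + m : ℕ) : ℤ)).natAbs = ((n:ℤ) - m).natAbs := by
            omega
          rw [h3] at h2
          have h4 := abs_le.1 h2
          simp only [he, if_neg hnm]
          linarith [h4.2]
      -- bound ∑_m e n m for n < K
      have hrow : ∀ n ∈ Finset.range K, ∑ m ∈ Finset.range K, e n m ≤ 1 + 2 * E := by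
        intro n hn
        have hnK : n < K := Finset.mem_range.1 hn
        have hsplit : (Finset.range K).erase n = Finset.range n ∪ Finset.Ico (n+1) K := by
          ext m
          simp only [Finset.mem_erase, Finset.mem_range, Finset.mem_union, Finset.mem_Ico]
          omega
        have hdisj : Disjoint (Finset.range n) (Finset.Ico (n+1) K) := by
          rw [Finset.disjoint_left]
          intro m hm hm'
          simp only [Finset.mem_range] at hm
          simp only [Finset.mem_Ico] at hm'
          omega
        have hsum1 : ∑ m ∈ Finset.range K, e n m
            = ∑ m ∈ (Finset.range K).erase n, e n m + e n n :=
          (Finset.sum_erase_add _ _ hn).symm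
        have henn : e n n = 1 := by simp [he]
        have hP1 : ∑ m ∈ Finset.range n, e n m ≤ E := by
          have heq : ∀ m ∈ Finset.range n, e n m = ε (n - m) := by
            intro m hm
            have hmn : m < n := Finset.mem_range.1 hm
            have : (((n:ℤ) - m).natAbs) = n - m := by omega
            simp [he, Nat.ne_of_gt hmn, this]
          rw [Finset.sum_congr rfl heq]
          have hrefl : ∑ m ∈ Finset.range n, ε (n - m) = ∑ m ∈ Finset.range n, ε (m + 1) := by
            rw [← Finset.sum_range_reflect (fun m => ε (n - m)) n]
            refine Finset.sum_congr rfl fun j hj => ?_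
            have hjn : j < n := Finset.mem_range.1 hj
            congr 1
            omega
          rw [hrefl, hE]
          refine Finset.sum_le_sum_of_subset_of_nonneg
            (Finset.range_subset_range.2 (le_of_lt hnK)) (fun k _ _ => hε _)
        have hP2 : ∑ m ∈ Finset.Ico (n+1) K, e n m ≤ E := by
          have heq : ∀ m ∈ Finset.Ico (n+1) K, e n m = ε (m - n) := by
            intro m hm
            have hmn : n < m := (Finset.mem_Ico.1 hm).1
            have : (((n:ℤ) - m).natAbs) = m - n := by omega
            simp [he, Nat.ne_of_lt hmn, this]
          rw [Finset.sum_congr rfl heq, Finset.sum_Ico_eq_sum_range]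
          have heq2 : ∀ i ∈ Finset.range (K - (n+1)), ε (n + 1 + i - n) = ε (i + 1) := by
            intro i _
            congr 1
            omega
          rw [Finset.sum_congr rfl heq2, hE]
          refine Finset.sum_le_sum_of_subset_of_nonneg
            (Finset.range_subset_range.2 (by omega)) (fun k _ _ => hε _)
        calc ∑ m ∈ Finset.range K, e n m
            = ∑ m ∈ (Finset.range K).erase n, e n m + 1 := by rw [hsum1, henn]
          _ = (∑ m ∈ Finset.range n, e n m + ∑ m ∈ Finset.Ico (n+1) K, e n m) + 1 := by
              rw [hsplit, Finset.sum_union hdisj]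
          _ ≤ (E + E) + 1 := by linarith
          _ = 1 + 2 * E := by ring
      -- double sum bound
      set D : ℝ := ∑ n ∈ Finset.range K, ∑ m ∈ Finset.range K,
        (μ (B (N+n) ∩ B (N+m))).toReal with hD
      have hDbound : D ≤ A^2 + K * (1 + 2 * E) := by
        have h1 : D ≤ ∑ n ∈ Finset.range K, ∑ m ∈ Finset.range K, (p n * p m + e n m) := by
          refine Finset.sum_le_sum fun n _ => Finset.sum_le_sum fun m _ => hterm n m
        have h2 : ∑ n ∈ Finset.range K, ∑ m ∈ Finset.range K, (p n * p m + e n m)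
            = A^2 + ∑ n ∈ Finset.range K, ∑ m ∈ Finset.range K, e n m := by
          have hpp : ∑ n ∈ Finset.range K, ∑ m ∈ Finset.range K, p n * p m = A^2 := by
            rw [hA, sq, Finset.sum_mul_sum]
          simp only [Finset.sum_add_distrib]
          rw [hpp]
        have h3 : ∑ n ∈ Finset.range K, ∑ m ∈ Finset.range K, e n m ≤ K * (1 + 2*E) := by
          calc ∑ n ∈ Finset.range K, ∑ m ∈ Finset.range K, e n m
              ≤ ∑ _n ∈ Finset.range K, (1 + 2*E) := Finset.sum_le_sum hrow
            _ = K * (1 + 2*E) := by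
              rw [Finset.sum_const, Finset.card_range, nsmul_eq_mul]
        linarith
      -- Chung-Erdős
      have hCE := chung_erdos μ (fun n => B (N + n)) (fun n => hB _) (Finset.range K)
      have hsub : (⋃ n ∈ Finset.range K, B (N + n)) ⊆ U := by
        refine Set.iUnion₂_subset fun n _ => ?_
        rw [hUdef]
        exact Set.subset_iUnion₂ (s := fun n (_ : N ≤ n) => B n) (N + n) (Nat.le_add_right N n)
      have hUK : (μ (⋃ n ∈ Finset.range K, B (N + n))).toReal ≤ t :=
        ENNReal.toReal_mono (measure_ne_top μ _) (measure_mono hsub)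
      have hUK0 : 0 ≤ (μ (⋃ n ∈ Finset.range K, B (N + n))).toReal := ENNReal.toReal_nonneg
      have hD0 : 0 ≤ D := Finset.sum_nonneg fun n _ => Finset.sum_nonneg
        fun m _ => ENNReal.toReal_nonneg
      have ht1 : t ≤ 1 := hone U
      have ht0 : 0 ≤ t := ENNReal.toReal_nonneg
      -- A^2 ≤ t * D
      have hmain : A^2 ≤ t * D := le_trans hCE (mul_le_mul_of_nonneg_right hUK hD0)
      -- conclude
      have hb0 : 0 ≤ (K:ℝ) * (1 + 2*E) := by positivity
      have hstep : A^2 * (1 - t) ≤ K * (1 + 2*E) := by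
        have h5 : t * D ≤ t * (A^2 + K*(1+2*E)) := mul_le_mul_of_nonneg_left hDbound ht0
        nlinarith [mul_nonneg (sub_nonneg.2 ht1) hb0]
      have hA2 : c^2 * K^2 ≤ A^2 := by
        have h := pow_le_pow_left₀ (by positivity : (0:ℝ) ≤ c*K) hAc 2
        calc c^2*K^2 = (c*K)^2 := by ring
          _ ≤ A^2 := h
      have hquot : 1 - t ≤ (K * (1 + 2*E)) / (c^2 * K^2) := by
        rw [le_div_iff₀ (by positivity)]
        nlinarith [mul_le_mul_of_nonneg_left hA2 (sub_nonneg.2 ht1)]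
      calc 1 - t ≤ (K * (1 + 2*E)) / (c^2 * K^2) := hquot
        _ = (1 + 2*E) / (c^2 * K) := by
            field_simp
    -- limit argument
    have hv : Tendsto (fun K : ℕ => (1 + 2 * ∑ k ∈ Finset.range K, ε (k+1)) / (c^2 * K))
        atTop (𝓝 0) := by
      have h1 : Tendsto (fun K : ℕ => (K:ℝ)⁻¹ + 2 * ((∑ k ∈ Finset.range K, ε (k+1)) / K))
          atTop (𝓝 (0 + 2 * 0)) :=
        (tendsto_inv_atTop_nhds_zero_nat).add ((kron_aux ε hε hsum).const_mul 2)
      have h2 := h1.const_mul (1 / c^2)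
      simp only [mul_zero, add_zero, mul_zero] at h2
      convert h2 using 2 with K
      rw [div_eq_mul_inv, mul_inv, div_eq_mul_inv, div_eq_mul_inv]
      ring
    have hle : 1 - t ≤ 0 :=
      ge_of_tendsto hv (eventually_atTop.2 ⟨1, fun K hK => key K hK⟩)
    have ht1 : t ≤ 1 := hone U
    have : t = 1 := le_antisymm ht1 (by linarith)
    have := (ENNReal.toReal_eq_one_iff (μ U)).1 this
    exact this
  -- put together
  have hmeas : ∀ N : ℕ, MeasurableSet (⋃ n : ℕ, ⋃ (_ : N ≤ n), B n) := fun N =>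
    MeasurableSet.iUnion fun n => MeasurableSet.iUnion fun _ => hB n
  rw [← prob_compl_eq_zero_iff (MeasurableSet.iInter hmeas)]
  rw [Set.compl_iInter]
  exact measure_iUnion_null fun N => (prob_compl_eq_zero_iff (hmeas N)).2 (main N)
end

section
/- Let α be irrational with denominators (q_n). Fix x ≠ y on the circle and n ∈ ℕ with ‖x − y‖ < 1/(6 q_n). Then at least one of the following holds: (i) 0 ∉ ⋃_{k=0}^{⌊q_{n+1}/6⌋} R_α^k [x, y]; (ii) 0 ∉ ⋃_{k=−⌊q_{n+1}/6⌋}^{0} R_α^k [x, y]; (iii) 0 ∈ ⋃_{k=0}^{q_n − 1} R_α^k [x, y]. -/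
/-- Iterates of the Gauss map applied to the fractional part of `α`. -/
noncomputable def gaussIter (α : ℝ) : ℕ → ℝ
  | 0 => Int.fract α
  | n+1 => Int.fract (gaussIter α n)⁻¹

/-- Partial quotients of the continued fraction expansion of `α` (`cfA α n` is `a_n`). -/
noncomputable def cfA (α : ℝ) : ℕ → ℕ
  | 0 => 0
  | n+1 => (⌊(gaussIter α n)⁻¹⌋).toNat

/-- Denominators of the continued fraction expansion of `α`. -/
noncomputable def cfQ (α : ℝ) : ℕ → ℕ
  | 0 => 1
  | 1 => cfA α 1
  | n+2 => cfA α (n+2) * cfQ α (n+1) + cfQ α n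


/-- The shortest arc joining `a` and `b` on the circle (for `‖a − b‖ < 1/2` this is the
set of points lying between `a` and `b` along the shorter way around). -/
def arc (a b : AddCircle (1:ℝ)) : Set (AddCircle (1:ℝ)) :=
  {z | ‖z - a‖ + ‖b - z‖ = ‖b - a‖}


noncomputable def cfP (α : ℝ) : ℕ → ℕ
  | 0 => 0
  | 1 => 1
  | n+2 => cfA α (n+2) * cfP α (n+1) + cfP α n

section CF
variable {α : ℝ} (hα : Irrational α) (hα1 : α ∈ Set.Ioo (0:ℝ) 1)

include hα hα1 in
lemma gauss_mem : ∀ n, Irrational (gaussIter α n) ∧ gaussIter α n ∈ Set.Ioo (0:ℝ) 1 := by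
  intro n
  induction n with
  | zero =>
    have : Int.fract α = α := Int.fract_eq_self.2 ⟨hα1.1.le, hα1.2⟩
    simp [gaussIter, this, hα, hα1]
  | succ n ih =>
    obtain ⟨hirr, h0, h1⟩ := ih
    have hinv : Irrational (gaussIter α n)⁻¹ := hirr.inv
    have hfrac : Irrational (Int.fract (gaussIter α n)⁻¹) := by
      rw [Int.fract]; exact hinv.sub_intCast _
    refine ⟨by simpa [gaussIter] using hfrac, ?_, ?_⟩
    · simp only [gaussIter]
      rcases eq_or_lt_of_le (Int.fract_nonneg (gaussIter α n)⁻¹) with h | h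
      · exact absurd h.symm (by exact_mod_cast hfrac.ne_int 0)
      · exact h
    · simpa [gaussIter] using Int.fract_lt_one (gaussIter α n)⁻¹

include hα hα1 in
lemma gauss_inv_gt_one (n : ℕ) : 1 < (gaussIter α n)⁻¹ := by
  obtain ⟨_, h0, h1⟩ := gauss_mem hα hα1 n
  exact (one_lt_inv₀ h0).2 h1

include hα hα1 in
lemma cfA_eq (n : ℕ) : (cfA α (n+1) : ℝ) = (⌊(gaussIter α n)⁻¹⌋ : ℤ) := by
  have h := gauss_inv_gt_one hα hα1 n
  have : (1:ℤ) ≤ ⌊(gaussIter α n)⁻¹⌋ := by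
    exact_mod_cast Int.le_floor.2 (by exact_mod_cast h.le)
  simp only [cfA]
  exact_mod_cast congrArg (fun z : ℤ => (z : ℝ)) (Int.toNat_of_nonneg (by omega : (0:ℤ) ≤ ⌊(gaussIter α n)⁻¹⌋))

include hα hα1 in
lemma cfA_pos (n : ℕ) : 1 ≤ cfA α (n+1) := by
  have h := gauss_inv_gt_one hα hα1 n
  have : (1:ℤ) ≤ ⌊(gaussIter α n)⁻¹⌋ := Int.le_floor.2 (by exact_mod_cast h.le)
  simp only [cfA]; omega

include hα hα1 in
lemma key_identity (n : ℕ) :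
    (cfA α (n+1) : ℝ) + gaussIter α (n+1) = (gaussIter α n)⁻¹ := by
  rw [cfA_eq hα hα1]
  show _ + Int.fract _ = _
  rw [Int.fract]; ring

include hα hα1 in
lemma cfQ_pos : ∀ n, 1 ≤ cfQ α n := by
  intro n
  induction n using Nat.strong_induction_on with
  | _ n ih =>
    match n with
    | 0 => simp [cfQ]
    | 1 => simpa [cfQ] using cfA_pos hα hα1 0
    | (m+2) =>
      have h1 := ih m (by omega)
      have h2 := cfA_pos hα hα1 (m+1)
      simp only [cfQ]
      nlinarith

/-- product of gauss iterates -/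
noncomputable def gprod (α : ℝ) (n : ℕ) : ℝ := ∏ j ∈ Finset.range (n+1), gaussIter α j

lemma gprod_succ (n : ℕ) : gprod α (n+1) = gprod α n * gaussIter α (n+1) := by
  rw [gprod, gprod, Finset.prod_range_succ]

include hα hα1 in
lemma gprod_pos (n : ℕ) : 0 < gprod α n :=
  Finset.prod_pos fun j _ => (gauss_mem hα hα1 j).2.1

include hα hα1 in
lemma gprod_lt_one (n : ℕ) : gprod α n < 1 := by
  induction n with
  | zero => simpa [gprod] using (gauss_mem hα hα1 0).2.2
  | succ n ih =>
    rw [gprod_succ]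
    have h1 := (gauss_mem hα hα1 (n+1)).2
    have h2 := gprod_pos hα hα1 n
    exact lt_trans (mul_lt_of_lt_one_right h2 h1.2) ih

include hα hα1 in
lemma theta_eq : ∀ n, (cfQ α n : ℝ) * α - (cfP α n : ℝ) = (-1)^n * gprod α n := by
  have hfr : Int.fract α = α := Int.fract_eq_self.2 ⟨hα1.1.le, hα1.2⟩
  have hg0 : gaussIter α 0 = α := by simp [gaussIter, hfr]
  have hα0 : α ≠ 0 := ne_of_gt hα1.1
  intro n
  induction n using Nat.strong_induction_on with
  | _ n ih =>
    match n with
    | 0 => simp [cfQ, cfP, gprod, hg0]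
    | 1 =>
      have hKI := key_identity hα hα1 0
      rw [hg0] at hKI
      simp only [cfQ, cfP, gprod, Finset.prod_range_succ, Finset.prod_range_one, hg0]
      have : gaussIter α 1 = α⁻¹ - (cfA α 1 : ℝ) := by linarith
      rw [this]
      field_simp
      ring
    | (m+2) =>
      have h1 := ih m (by omega)
      have h2 := ih (m+1) (by omega)
      have hKI := key_identity hα hα1 (m+1)
      have hgpos := (gauss_mem hα hα1 (m+1)).2.1
      have hx : gaussIter α (m+2) = (gaussIter α (m+1))⁻¹ - (cfA α (m+2) : ℝ) := by
        linarith
      have hne : gaussIter α (m+1) ≠ 0 := ne_of_gt hgpos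
      have hkey : gaussIter α (m+1) * ((cfA α (m+2) : ℝ) + gaussIter α (m+2)) = 1 := by
        rw [hKI]; exact mul_inv_cancel₀ hne
      simp only [cfQ, cfP, gprod_succ] at *
      push_cast
      linear_combination (cfA α (m+2) : ℝ) * h2 + h1 + ((-1:ℝ))^(m+1) * gprod α m * hkey

include hα hα1 in
lemma sum_identity : ∀ n, gprod α n * (cfQ α (n+1) : ℝ) + gprod α (n+1) * (cfQ α n : ℝ) = 1 := by
  have hfr : Int.fract α = α := Int.fract_eq_self.2 ⟨hα1.1.le, hα1.2⟩
  have hg0 : gaussIter α 0 = α := by simp [gaussIter, hfr]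
  intro n
  induction n with
  | zero =>
    have hKI := key_identity hα hα1 0
    have hα0 : α ≠ 0 := ne_of_gt hα1.1
    have : α * ((cfA α 1 : ℝ) + gaussIter α 1) = 1 := by
      rw [hg0] at hKI; rw [hKI]; exact mul_inv_cancel₀ hα0
    simp only [gprod, cfQ, Finset.prod_range_succ, Finset.prod_range_one, hg0]
    linear_combination this
  | succ n ih =>
    have hKI := key_identity hα hα1 (n+1)
    have hgpos := (gauss_mem hα hα1 (n+1)).2.1
    have hkey : gaussIter α (n+1) * ((cfA α (n+2) : ℝ) + gaussIter α (n+2)) = 1 := by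
      rw [hKI]; exact mul_inv_cancel₀ (ne_of_gt hgpos)
    have e1 : gprod α (n+1) = gprod α n * gaussIter α (n+1) := gprod_succ n
    have e2 : gprod α (n+2) = gprod α (n+1) * gaussIter α (n+2) := gprod_succ (n+1)
    show gprod α (n+1) * (cfQ α (n+2) : ℝ) + gprod α (n+2) * (cfQ α (n+1) : ℝ) = 1
    rw [e2, e1]
    simp only [cfQ]
    push_cast
    rw [e1] at ih
    linear_combination ih + gprod α n * (cfQ α (n+1) : ℝ) * hkey

include hα hα1 in
lemma gprod_lt (n : ℕ) : gprod α n * (cfQ α (n+1) : ℝ) < 1 := by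
  have h := sum_identity hα hα1 n
  have h1 := gprod_pos hα hα1 (n+1)
  have h2 : (1:ℝ) ≤ (cfQ α n : ℝ) := by exact_mod_cast cfQ_pos hα hα1 n
  nlinarith

lemma det_identity (α : ℝ) : ∀ n, (cfP α (n+1) : ℤ) * (cfQ α n : ℤ) - (cfP α n : ℤ) * (cfQ α (n+1) : ℤ) = (-1)^n := by
  intro n
  induction n with
  | zero => simp [cfP, cfQ]
  | succ n ih =>
    show (cfP α (n+2) : ℤ) * (cfQ α (n+1) : ℤ) - (cfP α (n+1) : ℤ) * (cfQ α (n+2) : ℤ) = (-1)^(n+1)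
    simp only [cfP, cfQ]
    push_cast
    linear_combination (-1 : ℤ) * ih

lemma cf_coprime (α : ℝ) (n : ℕ) : Nat.Coprime (cfP α n) (cfQ α n) := by
  cases n with
  | zero => simp [cfP, cfQ, Nat.Coprime]
  | succ n =>
    have h := det_identity α n
    rw [Nat.coprime_comm, ← Nat.isCoprime_iff_coprime]
    rcases Nat.even_or_odd n with he | ho
    · exact ⟨-(cfP α n : ℤ), (cfQ α n : ℤ), by rw [he.neg_one_pow] at h; linarith⟩
    · exact ⟨(cfP α n : ℤ), -(cfQ α n : ℤ), by rw [ho.neg_one_pow] at h; linarith⟩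

include hα hα1 in
lemma lemma_N {n m : ℕ} (hm : 0 < m) (hnd : ¬ ((cfQ α n) ∣ m)) (h3 : 3 * m ≤ cfQ α (n+1)) (p : ℤ) :
    1 / (6 * (cfQ α n : ℝ)) < |(m : ℝ) * α - p| := by
  set qn := cfQ α n with hqn
  set qn1 := cfQ α (n+1) with hqn1
  have hq : (1:ℝ) ≤ (qn : ℝ) := by exact_mod_cast cfQ_pos hα hα1 n
  have hq1 : (1:ℝ) ≤ (qn1 : ℝ) := by exact_mod_cast cfQ_pos hα hα1 (n+1)
  have hqpos : (0:ℝ) < qn := by linarith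
  have hq1pos : (0:ℝ) < qn1 := by linarith
  -- the integer m * p_n - p * q_n is nonzero
  have hint : (m : ℤ) * (cfP α n : ℤ) - p * (qn : ℤ) ≠ 0 := by
    intro h
    apply hnd
    have hdvd : (qn : ℤ) ∣ (m : ℤ) * (cfP α n : ℤ) := ⟨p, by linarith⟩
    have hcop : Nat.Coprime qn (cfP α n) := (cf_coprime α n).symm
    have hnat : qn ∣ m * cfP α n := Int.natCast_dvd_natCast.1 (by exact_mod_cast hdvd)
    exact hcop.dvd_of_dvd_mul_right hnat
  have habs : (1:ℝ) ≤ |(m : ℝ) * (cfP α n : ℝ) - (p : ℝ) * (qn : ℝ)| := by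
    have : (1:ℤ) ≤ |(m : ℤ) * (cfP α n : ℤ) - p * (qn : ℤ)| := Int.one_le_abs hint
    calc (1:ℝ) = ((1:ℤ) : ℝ) := by norm_num
    _ ≤ (|(m : ℤ) * (cfP α n : ℤ) - p * (qn : ℤ)| : ℤ) := by exact_mod_cast this
    _ = |(m : ℝ) * (cfP α n : ℝ) - (p : ℝ) * (qn : ℝ)| := by push_cast; ring_nf
  -- theta bound
  have htheta : |(qn : ℝ) * α - (cfP α n : ℝ)| < 1 / (qn1 : ℝ) := by
    rw [theta_eq hα hα1 n, abs_mul, abs_pow, abs_neg, abs_one, one_pow, one_mul,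
      abs_of_pos (gprod_pos hα hα1 n)]
    rw [lt_div_iff₀ hq1pos]
    exact gprod_lt hα hα1 n
  -- decomposition
  have hdecomp : (m : ℝ) * α - p = ((m : ℝ) / qn) * ((qn : ℝ) * α - (cfP α n : ℝ))
      + ((m : ℝ) * (cfP α n : ℝ) - (p : ℝ) * (qn : ℝ)) / qn := by
    field_simp
    ring
  have hm3 : 3 * (m : ℝ) ≤ (qn1 : ℝ) := by exact_mod_cast h3
  have hmpos : (0:ℝ) < m := by exact_mod_cast hm
  have h1 : |((m : ℝ) / qn) * ((qn : ℝ) * α - (cfP α n : ℝ))| ≤ 1 / (3 * qn) := by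
    rw [abs_mul, abs_of_pos (by positivity)]
    have : |(qn : ℝ) * α - (cfP α n : ℝ)| ≤ 1 / qn1 := le_of_lt htheta
    calc (m : ℝ) / qn * |(qn : ℝ) * α - (cfP α n : ℝ)| ≤ (m : ℝ) / qn * (1 / qn1) := by
          apply mul_le_mul_of_nonneg_left this (by positivity)
    _ ≤ 1 / (3 * qn) := by
          rw [div_mul_div_comm, mul_one, div_le_div_iff₀ (by positivity) (by positivity)]
          nlinarith
  have h2 : 1 / (qn : ℝ) ≤ |((m : ℝ) * (cfP α n : ℝ) - (p : ℝ) * (qn : ℝ)) / qn| := by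
    rw [abs_div, abs_of_pos hqpos, div_le_div_iff₀ hqpos hqpos, one_mul]
    nlinarith
  calc 1 / (6 * (qn : ℝ)) < 1 / qn - 1 / (3 * qn) := by
        rw [div_sub_div _ _ (ne_of_gt hqpos) (by positivity)]
        rw [div_lt_div_iff₀ (by positivity) (by positivity)]
        nlinarith
  _ ≤ |((m : ℝ) * (cfP α n : ℝ) - (p : ℝ) * (qn : ℝ)) / qn| - |((m : ℝ) / qn) * ((qn : ℝ) * α - (cfP α n : ℝ))| := by linarith
  _ ≤ |(m : ℝ) * α - p| := by
        rw [hdecomp]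
        have h := abs_sub_abs_le_abs_sub (((m : ℝ) * (cfP α n : ℝ) - (p : ℝ) * (qn : ℝ)) / qn)
          (-(((m : ℝ) / qn) * ((qn : ℝ) * α - (cfP α n : ℝ))))
        rw [abs_neg, sub_neg_eq_add, add_comm] at h
        linarith

end CF

namespace Stmt5Aux

lemma coe_sub' (a b : ℝ) : ((a - b : ℝ) : AddCircle (1:ℝ)) = (a : AddCircle (1:ℝ)) - (b : AddCircle (1:ℝ)) := rfl
lemma coe_add' (a b : ℝ) : ((a + b : ℝ) : AddCircle (1:ℝ)) = (a : AddCircle (1:ℝ)) + (b : AddCircle (1:ℝ)) := rfl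

lemma norm_coe (r : ℝ) : ‖((r : AddCircle (1:ℝ)))‖ = |r - round r| := by
  rw [AddCircle.norm_eq]; simp

lemma norm_coe_small {r : ℝ} (h : |r| ≤ 1/2) : ‖((r : AddCircle (1:ℝ)))‖ = |r| := by
  rw [AddCircle.norm_coe_eq_abs_iff _ one_ne_zero]; simpa using h

lemma coe_int_eq_zero (k : ℤ) : ((k : ℝ) : AddCircle (1:ℝ)) = 0 := by simp

/-- every point of the circle has a representative of absolute value at most 1/2 -/
lemma exists_lift (z : AddCircle (1:ℝ)) : ∃ c : ℝ, (c : AddCircle (1:ℝ)) = z ∧ |c| = ‖z‖ ∧ |c| ≤ 1/2 := by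
  induction z using QuotientAddGroup.induction_on with
  | H r =>
    refine ⟨r - round r, ?_, ?_, abs_sub_round r⟩
    · rw [coe_sub', coe_int_eq_zero, sub_zero]
    · rw [norm_coe]

lemma abs_le_of_uIcc {c δ : ℝ} (h : c ∈ Set.uIcc 0 δ) : |c| ≤ |δ| := by
  rw [Set.mem_uIcc] at h
  rcases h with ⟨h1, h2⟩ | ⟨h1, h2⟩ <;> rw [abs_le] <;>
    constructor <;> rcases abs_cases δ with ⟨ha, hb⟩ | ⟨ha, hb⟩ <;> linarith

/-- characterization of the arc by a short representative of `y - x` -/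
lemma arc_char {x y : AddCircle (1:ℝ)} {δ : ℝ} (hδy : (δ : AddCircle (1:ℝ)) = y - x)
    (hδ : |δ| < 1/4) (z : AddCircle (1:ℝ)) :
    z ∈ arc x y ↔ ∃ c ∈ Set.uIcc 0 δ, z = x + (c : AddCircle (1:ℝ)) := by
  have hyx : ‖y - x‖ = |δ| := by rw [← hδy, norm_coe_small (by linarith)]
  constructor
  · intro hz
    have hz' : ‖z - x‖ + ‖y - z‖ = ‖y - x‖ := hz
    obtain ⟨c, hc1, hc2, _⟩ := exists_lift (z - x)
    have hcle : |c| ≤ |δ| := by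
      rw [hc2]; rw [hyx] at hz'; linarith [norm_nonneg (y - z)]
    have hyz : y - z = ((δ - c : ℝ) : AddCircle (1:ℝ)) := by
      rw [coe_sub', hc1, hδy]; abel
    have habs : |δ - c| ≤ 1/2 := by
      have := abs_sub δ c
      linarith
    have hdc : ‖y - z‖ = |δ - c| := by rw [hyz, norm_coe_small habs]
    refine ⟨c, ?_, by rw [hc1]; abel⟩
    rw [hyx, ← hc2, hdc] at hz'
    rw [Set.mem_uIcc]
    rcases abs_cases c with ⟨ha1, ha2⟩ | ⟨ha1, ha2⟩ <;>
      rcases abs_cases (δ - c) with ⟨hb1, hb2⟩ | ⟨hb1, hb2⟩ <;>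
      rcases abs_cases δ with ⟨hc1', hc2'⟩ | ⟨hc1', hc2'⟩ <;>
      [left; left; left; right; left; right; right; right] <;> constructor <;> linarith
  · rintro ⟨c, hc, rfl⟩
    have hcle : |c| ≤ |δ| := abs_le_of_uIcc hc
    show ‖x + (c : AddCircle (1:ℝ)) - x‖ + ‖y - (x + c)‖ = ‖y - x‖
    have e1 : x + (c : AddCircle (1:ℝ)) - x = (c : AddCircle (1:ℝ)) := by abel
    have e2 : y - (x + (c : AddCircle (1:ℝ))) = ((δ - c : ℝ) : AddCircle (1:ℝ)) := by
      rw [coe_sub', hδy]; abel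
    have habs : |δ - c| ≤ 1/2 := by
      have := abs_sub δ c
      linarith
    rw [e1, e2, hyx, norm_coe_small (by linarith), norm_coe_small habs]
    rw [Set.mem_uIcc] at hc
    rcases hc with ⟨h1, h2⟩ | ⟨h1, h2⟩ <;>
      rcases abs_cases c with ⟨ha1, ha2⟩ | ⟨ha1, ha2⟩ <;>
      rcases abs_cases (δ - c) with ⟨hb1, hb2⟩ | ⟨hb1, hb2⟩ <;>
      rcases abs_cases δ with ⟨hc1', hc2'⟩ | ⟨hc1', hc2'⟩ <;> linarith

/-- the arc is "convex": real points between two lifts of arc members are in the arc -/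
lemma arc_convex {x y : AddCircle (1:ℝ)} {δ : ℝ} (hδy : (δ : AddCircle (1:ℝ)) = y - x)
    (hδ : |δ| < 1/4) {s t c : ℝ} (hs : (s : AddCircle (1:ℝ)) ∈ arc x y)
    (ht : (t : AddCircle (1:ℝ)) ∈ arc x y) (hst : |t - s| < 1/2)
    (hc : c ∈ Set.uIcc s t) : (c : AddCircle (1:ℝ)) ∈ arc x y := by
  obtain ⟨c₁, hc₁, hs'⟩ := (arc_char hδy hδ _).1 hs
  obtain ⟨c₂, hc₂, ht'⟩ := (arc_char hδy hδ _).1 ht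
  have hdiff : ((c₂ - c₁ - (t - s) : ℝ) : AddCircle (1:ℝ)) = 0 := by
    have h : (x : AddCircle (1:ℝ)) + c₂ - (x + c₁) = (t : AddCircle (1:ℝ)) - s := by
      rw [← hs', ← ht']
    rw [show (c₂ - c₁ - (t - s) : ℝ) = (c₂ - c₁) - (t - s) by ring, coe_sub', coe_sub', coe_sub']
    rw [show (x:AddCircle (1:ℝ)) + (c₂:AddCircle (1:ℝ)) - (x + (c₁:AddCircle (1:ℝ))) = (c₂:AddCircle (1:ℝ)) - (c₁:AddCircle (1:ℝ)) by abel] at h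
    rw [h]; abel
  have hint : ∃ k : ℤ, c₂ - c₁ - (t - s) = k := by
    obtain ⟨k, hk⟩ := (AddCircle.coe_eq_zero_iff (p := (1:ℝ))).1 hdiff
    exact ⟨k, by rw [← hk]; simp⟩
  obtain ⟨k, hk⟩ := hint
  have h1 : |c₁| ≤ |δ| := abs_le_of_uIcc hc₁
  have h2 : |c₂| ≤ |δ| := abs_le_of_uIcc hc₂
  have hklt : |(k : ℝ)| < 1 := by
    rw [← hk]
    have := abs_sub c₂ c₁
    have := abs_sub (c₂ - c₁) (t - s)
    linarith
  have hk0 : k = 0 := by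
    have h' : |k| < (1:ℤ) := by rw [← @Int.cast_abs ℝ] at hklt; exact_mod_cast hklt
    rw [abs_lt] at h'
    omega
  rw [hk0] at hk
  push_cast at hk
  have heq : c₂ - c₁ = t - s := by linarith
  have hmem : c₁ + (c - s) ∈ Set.uIcc c₁ c₂ := by
    rw [Set.mem_uIcc] at hc ⊢
    rcases hc with ⟨ha, hb⟩ | ⟨ha, hb⟩
    · left; constructor <;> linarith
    · right; constructor <;> linarith
  have hsub : Set.uIcc c₁ c₂ ⊆ Set.uIcc 0 δ := Set.uIcc_subset_uIcc hc₁ hc₂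
  refine (arc_char hδy hδ _).2 ⟨c₁ + (c - s), hsub hmem, ?_⟩
  have : (c : AddCircle (1:ℝ)) =
      ((c₁ + (c - s) : ℝ) : AddCircle (1:ℝ)) + ((s:ℝ) : AddCircle (1:ℝ)) - ((c₁:ℝ) : AddCircle (1:ℝ)) := by
    rw [← coe_add', ← coe_sub']
    congr 1
    ring
  rw [this, hs']
  abel

end Stmt5Aux


section Main
open Stmt5Aux

lemma coe_neg' (a : ℝ) : ((-a : ℝ) : AddCircle (1:ℝ)) = -(a : AddCircle (1:ℝ)) := rfl

lemma coe_nat_zero (j : ℕ) : (((j:ℝ)) : AddCircle (1:ℝ)) = 0 := by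
  exact_mod_cast coe_int_eq_zero (j : ℤ)

lemma abs_sub_le_of_uIcc {c₁ c₂ δ : ℝ} (h₁ : c₁ ∈ Set.uIcc 0 δ) (h₂ : c₂ ∈ Set.uIcc 0 δ) :
    |c₂ - c₁| ≤ |δ| := by
  rw [Set.mem_uIcc] at h₁ h₂
  rcases h₁ with ⟨ha, hb⟩ | ⟨ha, hb⟩ <;> rcases h₂ with ⟨hc, hd⟩ | ⟨hc, hd⟩ <;>
    rw [abs_le] <;> constructor <;> rcases abs_cases δ with ⟨h5, h6⟩ | ⟨h5, h6⟩ <;> linarith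

set_option maxHeartbeats 1000000 in
/-- For irrational `α` with denominators `q_n`, `x ≠ y` with `‖x−y‖ < 1/(6 q_n)`,
either the forward orbit of the arc `[x,y]` up to time `⌊q_{n+1}/6⌋` avoids `0`, or the
backward orbit up to time `⌊q_{n+1}/6⌋` avoids `0`, or the forward orbit hits `0` before
time `q_n`. -/
theorem stmt5 (α : ℝ) (hα : Irrational α) (hα1 : α ∈ Set.Ioo (0:ℝ) 1)
    (x y : AddCircle (1:ℝ)) (hxy : x ≠ y) (n : ℕ)
    (hd : ‖x - y‖ < 1 / (6 * (cfQ α n : ℝ))) :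
    (∀ k : ℕ, k ≤ cfQ α (n+1) / 6 →
        (0 : AddCircle (1:ℝ)) ∉ (fun z => z + (((k : ℝ) * α : ℝ) : AddCircle (1:ℝ))) '' arc x y) ∨
    (∀ k : ℕ, k ≤ cfQ α (n+1) / 6 →
        (0 : AddCircle (1:ℝ)) ∉ (fun z => z - (((k : ℝ) * α : ℝ) : AddCircle (1:ℝ))) '' arc x y) ∨
    (∃ k : ℕ, k < cfQ α n ∧
        (0 : AddCircle (1:ℝ)) ∈ (fun z => z + (((k : ℝ) * α : ℝ) : AddCircle (1:ℝ))) '' arc x y) := by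
  classical
  by_cases hfw : ∀ k : ℕ, k ≤ cfQ α (n+1) / 6 →
      (0 : AddCircle (1:ℝ)) ∉ (fun z => z + (((k : ℝ) * α : ℝ) : AddCircle (1:ℝ))) '' arc x y
  · exact Or.inl hfw
  by_cases hbw : ∀ k : ℕ, k ≤ cfQ α (n+1) / 6 →
      (0 : AddCircle (1:ℝ)) ∉ (fun z => z - (((k : ℝ) * α : ℝ) : AddCircle (1:ℝ))) '' arc x y
  · exact Or.inr (Or.inl hbw)
  refine Or.inr (Or.inr ?_)
  push_neg at hfw hbw
  obtain ⟨k₁, hk₁le, hk₁⟩ := hfw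
  obtain ⟨k₂, hk₂le, hk₂⟩ := hbw
  obtain ⟨z, hz, hz0⟩ := hk₁
  obtain ⟨w, hw, hw0⟩ := hk₂
  simp only at hz0 hw0
  -- basic positivity
  have hq0 : 0 < cfQ α n := cfQ_pos hα hα1 n
  have hq10 : 0 < cfQ α (n+1) := cfQ_pos hα hα1 (n+1)
  have hqR : (1:ℝ) ≤ (cfQ α n : ℝ) := by exact_mod_cast hq0
  have hq1R : (1:ℝ) ≤ (cfQ α (n+1) : ℝ) := by exact_mod_cast hq10
  have hd6 : ‖x - y‖ < 1/6 := by
    apply lt_of_lt_of_le hd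
    rw [div_le_div_iff₀ (by linarith) (by norm_num)]
    linarith
  -- short representative of y - x
  obtain ⟨δ, hδ1, hδ2, hδ3⟩ := exists_lift (y - x)
  have hδd : |δ| = ‖x - y‖ := by rw [hδ2, norm_sub_rev]
  have hδ4 : |δ| < 1/4 := by rw [hδd]; linarith
  have hδlt : |δ| < 1 / (6 * (cfQ α n : ℝ)) := by rw [hδd]; exact hd
  -- identify z and w
  have hzeq : z = ((-((k₁:ℝ) * α) : ℝ) : AddCircle (1:ℝ)) := by
    rw [coe_neg']
    exact eq_neg_of_add_eq_zero_left hz0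
  have hweq : w = ((((k₂:ℝ) * α) : ℝ) : AddCircle (1:ℝ)) := by
    rw [sub_eq_zero] at hw0
    exact hw0
  set m : ℕ := k₁ + k₂ with hm
  rcases Nat.eq_zero_or_pos m with hm0 | hmpos
  · -- degenerate case : both shifts are zero, 0 is in the arc
    have hk10 : k₁ = 0 := by omega
    refine ⟨0, hq0, z, hz, ?_⟩
    simp only
    rw [hk10] at hz0
    simpa using hz0
  -- the norm of m α is at most |δ|
  obtain ⟨cz, hcz, hcz'⟩ := (arc_char hδ1 hδ4 z).1 hz
  obtain ⟨cw, hcw, hcw'⟩ := (arc_char hδ1 hδ4 w).1 hw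
  have hwz : w - z = (((cw - cz : ℝ)) : AddCircle (1:ℝ)) := by
    rw [hcz', hcw', coe_sub']; abel
  have hwz2 : w - z = ((((m:ℝ) * α) : ℝ) : AddCircle (1:ℝ)) := by
    rw [hzeq, hweq, ← coe_sub']
    congr 1
    push_cast [hm]
    ring
  have hnormm : ‖((((m:ℝ) * α) : ℝ) : AddCircle (1:ℝ))‖ ≤ |δ| := by
    rw [← hwz2, hwz, norm_coe_small (le_trans (abs_sub_le_of_uIcc hcz hcw) (by linarith))]
    exact abs_sub_le_of_uIcc hcz hcw
  -- q_n divides m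
  have h3m : 3 * m ≤ cfQ α (n+1) := by omega
  have hdvd : cfQ α n ∣ m := by
    by_contra hnd
    have hN := lemma_N hα hα1 hmpos hnd h3m (round ((m:ℝ) * α))
    rw [← norm_coe ((m:ℝ) * α)] at hN
    have := lt_of_le_of_lt hnormm hδlt
    linarith
  obtain ⟨a, ham⟩ := hdvd
  set b : ℕ := k₁ / cfQ α n with hb
  set r : ℕ := k₁ % cfQ α n with hr
  have hba : b ≤ a := by
    have h1 : k₁ ≤ m := by omega
    have := Nat.div_le_div_right (c := cfQ α n) h1
    rwa [ham, Nat.mul_div_cancel_left a hq0] at this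
  -- the real shift
  set ε : ℝ := (cfQ α n : ℝ) * α - (cfP α n : ℝ) with hε
  have hεlt : |ε| < 1 / (cfQ α (n+1) : ℝ) := by
    rw [hε, theta_eq hα hα1 n, abs_mul, abs_pow, abs_neg, abs_one, one_pow, one_mul,
      abs_of_pos (gprod_pos hα hα1 n), lt_div_iff₀ (by linarith)]
    exact gprod_lt hα hα1 n
  have haq : (a : ℝ) * (cfQ α n : ℝ) = (m : ℝ) := by rw [ham]; push_cast; ring
  have ha3 : 3 * (a:ℝ) ≤ (cfQ α (n+1) : ℝ) := by
    have haa : a ≤ m := by rw [ham]; exact Nat.le_mul_of_pos_left a hq0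
    have : 3 * a ≤ cfQ α (n+1) := by omega
    exact_mod_cast this
  have haε : (a:ℝ) * |ε| ≤ 1/3 := by
    rcases Nat.eq_zero_or_pos a with h | h
    · simp [h]
    · have haR : (0:ℝ) < a := by exact_mod_cast h
      calc (a:ℝ) * |ε| ≤ (a:ℝ) * (1 / (cfQ α (n+1) : ℝ)) := by
            apply mul_le_mul_of_nonneg_left (le_of_lt hεlt) (le_of_lt haR)
      _ ≤ 1/3 := by
            rw [mul_one_div, div_le_div_iff₀ (by linarith) (by norm_num)]
            linarith
  -- the three points
  set s0 : ℝ := -((k₁:ℝ) * α) with hs0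
  have hs0arc : ((s0 : ℝ) : AddCircle (1:ℝ)) ∈ arc x y := by rw [← hzeq] at *; exact hz
  have hsaarc : (((s0 + (a:ℝ) * ε) : ℝ) : AddCircle (1:ℝ)) ∈ arc x y := by
    have : ((s0 + (a:ℝ) * ε : ℝ) : AddCircle (1:ℝ)) = w := by
      have hcalc : (s0 + (a:ℝ) * ε : ℝ) = (k₂:ℝ) * α + (-(((a * cfP α n : ℕ) : ℝ))) := by
        rw [hs0, hε]
        push_cast
        have hsum : (a:ℝ) * (cfQ α n : ℝ) = (k₁ : ℝ) + (k₂ : ℝ) := by rw [haq]; push_cast [hm]; ring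
        linear_combination α * hsum
      rw [hcalc, coe_add', coe_neg', coe_nat_zero, hweq]
      abel
    rw [this]; exact hw
  have hmidarc : (((s0 + (b:ℝ) * ε) : ℝ) : AddCircle (1:ℝ)) ∈ arc x y := by
    apply arc_convex hδ1 hδ4 hs0arc hsaarc
    · rw [show s0 + (a:ℝ)*ε - s0 = (a:ℝ)*ε by ring, abs_mul, abs_of_nonneg (by positivity : (0:ℝ) ≤ (a:ℝ))]
      linarith
    · have hbaR : (b:ℝ) ≤ (a:ℝ) := by exact_mod_cast hba
      have hbR : (0:ℝ) ≤ (b:ℝ) := by positivity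
      rw [Set.mem_uIcc]
      rcases le_or_gt 0 ε with hsgn | hsgn
      · left
        constructor <;> nlinarith
      · right
        constructor <;> nlinarith
  refine ⟨r, Nat.mod_lt _ hq0, (((-((r:ℝ) * α)) : ℝ) : AddCircle (1:ℝ)), ?_, ?_⟩
  · have hnat : cfQ α n * b + r = k₁ := by rw [hb, hr]; exact Nat.div_add_mod k₁ (cfQ α n)
    have hk1brq : (k₁ : ℝ) = (cfQ α n : ℝ) * (b:ℝ) + (r:ℝ) := by exact_mod_cast hnat.symm
    have hcalc : (s0 + (b:ℝ) * ε : ℝ) = -((r:ℝ) * α) + (-(((b * cfP α n : ℕ) : ℝ))) := by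
      rw [hs0, hε]
      push_cast
      linear_combination (-α) * hk1brq
    rw [hcalc, coe_add', coe_neg', coe_neg', coe_nat_zero, neg_zero, add_zero] at hmidarc
    exact hmidarc
  · simp only
    rw [coe_neg']
    abel

end Main
end
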